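/- arXiv:1708.09253 — 7 statements merged into one kernel-verified Lean document; each statement's English description precedes it below -/
import Mathlib

section
/- Let A = (Q,T) be a d-dimensional VASS. If there exists a vector n ∈ ℝ^d with all components positive such that v · n < 0 for every v ∈ Inc(A), then the termination complexity of A is O(n), i.e., there is a constant a ∈ ℝ⁺ such that 𝓛(m) ≤ a·m for all sufficiently large m ∈ ℕ. -/
open scoped BigOperators ENNReal

/-- A `d`-dimensional VASS: a set of states `Q` together with transitions
labelled by vectors in `{-1,0,1}^d`. -/
structure VASS (d : ℕ) (Q : Type) where
  T : Set (Q × (Fin d → ℤ) × Q)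
  upd_mem : ∀ t ∈ T, ∀ i, t.2.1 i = -1 ∨ t.2.1 i = 0 ∨ t.2.1 i = 1

namespace VASS

variable {d : ℕ} {Q : Type}

/-- Scalar product of an integer vector with a real vector. -/
def dotZ (v : Fin d → ℤ) (w : Fin d → ℝ) : ℝ := ∑ i, (v i : ℝ) * w i

/-- Scalar product of two real vectors. -/
def dotR (v w : Fin d → ℝ) : ℝ := ∑ i, v i * w i

/-- `A.IsPath n p u` : `p 0, u 0, p 1, u 1, …, u (n-1), p n` is a finite path
of length `n ≥ 1` in `A`. -/
def IsPath (A : VASS d Q) (n : ℕ) (p : ℕ → Q) (u : ℕ → Fin d → ℤ) : Prop :=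
  1 ≤ n ∧ ∀ i < n, (p i, u i, p (i + 1)) ∈ A.T

/-- Effect of a path of length `n` with update vectors `u`. -/
def eff (n : ℕ) (u : ℕ → Fin d → ℤ) : Fin d → ℤ :=
  fun i => ∑ j ∈ Finset.range n, u j i

/-- A short cycle: a cycle of length at most `|Q|`. -/
def IsShortCycle (A : VASS d Q) (n : ℕ) (p : ℕ → Q) (u : ℕ → Fin d → ℤ) : Prop :=
  A.IsPath n p u ∧ p n = p 0 ∧ n ≤ Nat.card Q

/-- `Inc A` : the set of effects of short cycles of `A`. -/
def Inc (A : VASS d Q) : Set (Fin d → ℤ) :=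
  { v | ∃ n p u, A.IsShortCycle n p u ∧ v = eff n u }

/-- A zero-avoiding computation of length `n` : all configurations have all
counters positive and consecutive configurations are related by transitions. -/
def IsZeroAvoiding (A : VASS d Q) (n : ℕ) (q : ℕ → Q) (z : ℕ → Fin d → ℕ) : Prop :=
  (∀ i ≤ n, ∀ j, 0 < z i j) ∧
  ∀ i < n, (q i, fun j => (z (i + 1) j : ℤ) - (z i j : ℤ), q (i + 1)) ∈ A.T

/-- `L(pv)` : the least bound on the length of zero-avoiding computations
initiated in the configuration `p v`. -/
noncomputable def Lval (A : VASS d Q) (p : Q) (v : Fin d → ℕ) : ℕ∞ :=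
  ⨆ (n : ℕ) (_ : ∃ q z, q 0 = p ∧ z 0 = v ∧ A.IsZeroAvoiding n q z), (n : ℕ∞)

/-- Termination complexity `𝓛(n)` : the max of `L(pv)` over configurations of size `n`. -/
noncomputable def L (A : VASS d Q) (n : ℕ) : ℕ∞ :=
  ⨆ (p : Q) (v : Fin d → ℕ) (_ : Finset.univ.sup v = n), A.Lval p v

/-- The set of normals of `A`: nonzero vectors `nv` with `v · nv ≤ 0` for all `v ∈ Inc A`. -/
def Normals (A : VASS d Q) : Set (Fin d → ℝ) :=
  { nv | nv ≠ 0 ∧ ∀ v ∈ A.Inc, dotZ v nv ≤ 0 }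

/-- The cone (over ℝ) generated by a set of integer vectors. -/
def coneZ (V : Set (Fin d → ℤ)) : Set (Fin d → ℝ) :=
  { x | ∃ (k : ℕ) (a : Fin k → ℝ) (v : Fin k → Fin d → ℤ),
      (∀ j, 0 ≤ a j) ∧ (∀ j, v j ∈ V) ∧ x = ∑ j, a j • (fun i => ((v j i : ℝ))) }

/-- A good normal: a positive normal such that for every `v ∈ cone(Inc A)`,
`-v ∈ cone(Inc A)` iff `v · n = 0`. -/
def IsGoodNormal (A : VASS d Q) (nv : Fin d → ℝ) : Prop :=
  nv ∈ A.Normals ∧ (∀ i, 0 < nv i) ∧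
  ∀ x ∈ coneZ A.Inc, (-x ∈ coneZ A.Inc ↔ dotR x nv = 0)

/-- `A.Reaches p q` : there is a finite path from `p` to `q`. -/
def Reaches (A : VASS d Q) (p q : Q) : Prop :=
  ∃ n pp u, A.IsPath n pp u ∧ pp 0 = p ∧ pp n = q

/-- A strongly connected component: a maximal set of states pairwise connected
by finite paths. -/
def IsSCC (A : VASS d Q) (R : Set Q) : Prop :=
  (∀ p ∈ R, ∀ q ∈ R, p ≠ q → A.Reaches p q) ∧
  ∀ S : Set Q, R ⊆ S → (∀ p ∈ S, ∀ q ∈ S, p ≠ q → A.Reaches p q) → S = R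

/-- The VASS `A` restricted to the states of `R` and transitions within `R`. -/
def restrict (A : VASS d Q) (R : Set Q) : VASS d R where
  T := { t | ((t.1 : Q), t.2.1, (t.2.2 : Q)) ∈ A.T }
  upd_mem := fun _ ht i => A.upd_mem _ ht i

/-- The VASS `A^nv = (Q, T_nv)` where `T_nv` consists of the transitions of `A`
contained in some short cycle `γ` with `eff(γ) · nv = 0`. -/
def neutral (A : VASS d Q) (nv : Fin d → ℝ) : VASS d Q where
  T := { t ∈ A.T | ∃ n p u, A.IsShortCycle n p u ∧ dotZ (eff n u) nv = 0 ∧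
          ∃ i < n, (p i, u i, p (i + 1)) = t }
  upd_mem := fun t ht i => A.upd_mem t ht.1 i

end VASS

section Aux
open VASS Finset
variable {d : ℕ} {Q : Type}

lemma my_dotZ_le (A : VASS d Q) (nv : Fin d → ℝ) (hpos : ∀ i, 0 < nv i)
    {t : Q × (Fin d → ℤ) × Q} (ht : t ∈ A.T) :
    dotZ t.2.1 nv ≤ ∑ i, nv i := by
  apply Finset.sum_le_sum
  intro i _
  have h := A.upd_mem t ht i
  have h2 := (hpos i).le
  rcases h with h | h | h <;> rw [h] <;> push_cast <;> nlinarith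

lemma my_dotZ_eff_eq (n : ℕ) (u : ℕ → Fin d → ℤ) (nv : Fin d → ℝ) :
    dotZ (eff n u) nv = ∑ j ∈ Finset.range n, dotZ (u j) nv := by
  unfold dotZ eff
  push_cast
  simp_rw [Finset.sum_mul]
  exact Finset.sum_comm

lemma my_inc_finite (A : VASS d Q) : A.Inc.Finite := by
  apply Set.Finite.subset (Set.Finite.pi (fun i : Fin d =>
    Set.finite_Icc (-(Nat.card Q : ℤ)) (Nat.card Q)))
  rintro v ⟨n, p, u, ⟨⟨h1, htr⟩, hcyc, hn⟩, rfl⟩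
  intro i _
  simp only [Set.mem_Icc]
  have hb : ∀ j < n, -1 ≤ u j i ∧ u j i ≤ 1 := by
    intro j hj
    have h : u j i = -1 ∨ u j i = 0 ∨ u j i = 1 := A.upd_mem _ (htr j hj) i
    omega
  constructor
  · calc -(Nat.card Q : ℤ) ≤ -(n : ℤ) := by exact_mod_cast neg_le_neg (by exact_mod_cast hn)
      _ = ∑ _j ∈ Finset.range n, (-1 : ℤ) := by simp
      _ ≤ eff n u i := Finset.sum_le_sum fun j hj => (hb j (Finset.mem_range.mp hj)).1
  · calc eff n u i ≤ ∑ _j ∈ Finset.range n, (1 : ℤ) :=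
        Finset.sum_le_sum fun j hj => (hb j (Finset.mem_range.mp hj)).2
      _ = (n : ℤ) := by simp
      _ ≤ (Nat.card Q : ℤ) := by exact_mod_cast hn

lemma my_exists_eps (A : VASS d Q) (nv : Fin d → ℝ)
    (hneg : ∀ v ∈ A.Inc, dotZ v nv < 0) :
    ∃ ε : ℝ, 0 < ε ∧ ∀ v ∈ A.Inc, dotZ v nv ≤ -ε := by
  rcases Set.eq_empty_or_nonempty A.Inc with h | h
  · exact ⟨1, one_pos, by simp [h]⟩
  · have hfin := my_inc_finite A
    obtain ⟨b, hb, hmax⟩ := Finset.exists_max_image hfin.toFinset (fun v => dotZ v nv)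
      (by simpa [Set.Finite.toFinset] using h)
    rw [Set.Finite.mem_toFinset] at hb
    refine ⟨-(dotZ b nv), by linarith [hneg b hb], fun v hv => ?_⟩
    have := hmax v (hfin.mem_toFinset.mpr hv)
    linarith
end Aux

section Key
open VASS Finset
variable {d : ℕ} {Q : Type}

lemma my_key (A : VASS d Q) [Fintype Q] [Nonempty Q] (nv : Fin d → ℝ)
    (hpos : ∀ i, 0 < nv i) {ε : ℝ} (hε : 0 < ε)
    (hInc : ∀ v ∈ A.Inc, dotZ v nv ≤ -ε) :
    ∀ n p u, A.IsPath n p u →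
      ε * n + (Nat.card Q) * (∑ j ∈ Finset.range n, dotZ (u j) nv) ≤
        (Nat.card Q)^2 * (∑ i, nv i) + (Nat.card Q) * ε := by
  have hC0 : 0 ≤ ∑ i, nv i := Finset.sum_nonneg fun i _ => (hpos i).le
  have hK1 : 1 ≤ Nat.card Q := Nat.card_pos
  intro n
  induction n using Nat.strong_induction_on with
  | _ n IH =>
    intro p u hpu
    by_cases hnK : n ≤ Nat.card Q
    · -- short path
      have hsum : ∑ j ∈ Finset.range n, dotZ (u j) nv ≤ n * ∑ i, nv i := by
        calc ∑ j ∈ Finset.range n, dotZ (u j) nv ≤ ∑ _j ∈ Finset.range n, ∑ i, nv i :=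
          Finset.sum_le_sum fun j hj =>
            my_dotZ_le A nv hpos (hpu.2 j (Finset.mem_range.mp hj))
        _ = n * ∑ i, nv i := by simp [mul_comm]
      have h1 : (n : ℝ) ≤ Nat.card Q := by exact_mod_cast hnK
      have h2 : (0:ℝ) ≤ Nat.card Q := by positivity
      nlinarith [mul_le_mul_of_nonneg_left hsum h2,
        mul_nonneg (mul_nonneg h2 (sub_nonneg.mpr h1)) hC0]
    · -- long path: extract a short cycle
      push_neg at hnK
      have hcard : Fintype.card Q < Fintype.card (Fin (Nat.card Q + 1)) := by
        simp [Nat.card_eq_fintype_card]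
      obtain ⟨a', b', hne, heq⟩ := Fintype.exists_ne_map_eq_of_card_lt
        (fun i : Fin (Nat.card Q + 1) => p i) hcard
      obtain ⟨a, b, hab, hbK, hpab⟩ : ∃ a b : ℕ, a < b ∧ b ≤ Nat.card Q ∧ p a = p b := by
        rcases hne.lt_or_gt with h | h
        · exact ⟨a', b', h, by omega, heq⟩
        · exact ⟨b', a', h, by omega, heq.symm⟩
      obtain ⟨ℓ, hℓ1, habℓ⟩ : ∃ ℓ, 1 ≤ ℓ ∧ a + ℓ = b := ⟨b - a, by omega, by omega⟩
      have hℓK : ℓ ≤ Nat.card Q := by omega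
      have hbn : b < n := lt_of_le_of_lt hbK hnK
      -- the short cycle
      have hcycmem : eff ℓ (fun j => u (a + j)) ∈ A.Inc := by
        refine ⟨ℓ, fun i => p (a + i), fun j => u (a + j), ⟨⟨hℓ1, ?_⟩, ?_, hℓK⟩, rfl⟩
        · intro i hi
          exact hpu.2 (a + i) (by omega)
        · show p (a + ℓ) = p (a + 0)
          rw [habℓ, Nat.add_zero]
          exact hpab.symm
      have hcyc : ∑ j ∈ Finset.range ℓ, dotZ (u (a + j)) nv ≤ -ε := by
        have h3 := hInc _ hcycmem
        rwa [my_dotZ_eff_eq] at h3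
      -- the spliced path
      set u'' : ℕ → Fin d → ℤ := fun j => if j < a then u j else u (j + ℓ) with hu''
      set p'' : ℕ → Q := fun i => if i ≤ a then p i else p (i + ℓ) with hp''
      have hp''a : ∀ i, a ≤ i → p'' i = p (i + ℓ) := by
        intro i hi
        rcases eq_or_lt_of_le hi with h | h
        · rw [hp'']
          simp only [← h, le_refl, if_pos]
          rw [hpab, ← habℓ]
        · rw [hp'']
          simp only [if_neg (by omega : ¬ i ≤ a)]
      have hpath'' : A.IsPath (n - ℓ) p'' u'' := by
        constructor
        · omega
        · intro i hi
          by_cases hia : i < a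
          · rw [hp'', hu'']
            simp only [if_pos hia, if_pos (by omega : i ≤ a), if_pos (by omega : i + 1 ≤ a)]
            exact hpu.2 i (by omega)
          · push_neg at hia
            rw [hp''a i hia, hp''a (i+1) (by omega), hu'']
            simp only [if_neg (by omega : ¬ i < a)]
            have h4 : (i + 1) + ℓ = (i + ℓ) + 1 := by omega
            rw [h4]
            exact hpu.2 (i + ℓ) (by omega)
      have IH'' := IH (n - ℓ) (by omega) p'' u'' hpath''
      -- sum splitting
      have hsplit : ∑ j ∈ Finset.range n, dotZ (u j) nv =
          (∑ j ∈ Finset.range (n - ℓ), dotZ (u'' j) nv) +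
          ∑ j ∈ Finset.range ℓ, dotZ (u (a + j)) nv := by
        obtain ⟨r, hr⟩ : ∃ r, n = b + r := ⟨n - b, by omega⟩
        have h1 : n = a + (ℓ + r) := by omega
        have h2 : n - ℓ = a + r := by omega
        rw [h2, h1, Finset.sum_range_add, Finset.sum_range_add, Finset.sum_range_add]
        have e2 : ∀ j ∈ Finset.range a, dotZ (u'' j) nv = dotZ (u j) nv := by
          intro j hj
          rw [hu'']
          simp only [if_pos (Finset.mem_range.mp hj)]
        have e3 : ∀ j ∈ Finset.range r, dotZ (u'' (a + j)) nv
            = dotZ (u (a + (ℓ + j))) nv := by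
          intro j _
          rw [hu'']
          simp only [if_neg (by omega : ¬ a + j < a)]
          have h5 : a + j + ℓ = a + (ℓ + j) := by omega
          rw [h5]
        rw [Finset.sum_congr rfl e2, Finset.sum_congr rfl e3]
        ring
      have hℓKr : (ℓ : ℝ) ≤ Nat.card Q := by exact_mod_cast hℓK
      have hK0 : (0:ℝ) ≤ Nat.card Q := by positivity
      have hnr : (n : ℝ) = ((n - ℓ : ℕ) : ℝ) + ℓ := by
        have : n = (n - ℓ) + ℓ := by omega
        exact_mod_cast congrArg (Nat.cast : ℕ → ℝ) this
      rw [hsplit, hnr]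
      nlinarith [mul_le_mul_of_nonneg_left hcyc hK0]
end Key

/-- if there is a componentwise positive `nv` with `v · nv < 0` for
every `v ∈ Inc(A)`, then the termination complexity of `A` is `O(n)`. -/
theorem stmt0 {d : ℕ} {Q : Type} [Fintype Q] [Nonempty Q] (A : VASS d Q)
    (nv : Fin d → ℝ) (hpos : ∀ i, 0 < nv i)
    (hneg : ∀ v ∈ A.Inc, VASS.dotZ v nv < 0) :
    ∃ a : ℝ, 0 < a ∧ ∃ N : ℕ, ∀ m : ℕ, N ≤ m →
      (A.L m : ℝ≥0∞) ≤ ENNReal.ofReal (a * m) := by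
  obtain ⟨ε, hε, hInc⟩ := my_exists_eps A nv hneg
  have hC0 : 0 ≤ ∑ i, nv i := Finset.sum_nonneg fun i _ => (hpos i).le
  have hK0 : (0:ℝ) ≤ Nat.card Q := by positivity
  set C : ℝ := ∑ i, nv i with hC
  set a : ℝ := ((Nat.card Q : ℝ)^2 * C + Nat.card Q * ε + Nat.card Q * C)/ε + 1 with ha_def
  have ha : 0 < a := by
    have h1 : 0 ≤ ((Nat.card Q : ℝ)^2 * C + Nat.card Q * ε + Nat.card Q * C)/ε := by
      apply div_nonneg _ hε.le
      nlinarith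
    rw [ha_def]; linarith
  refine ⟨a, ha, 1, fun m hm => ?_⟩
  have hm1 : (1:ℝ) ≤ m := by exact_mod_cast hm
  -- main claim
  have main : ∀ (p : Q) (v : Fin d → ℕ), Finset.univ.sup v = m → ∀ n : ℕ,
      (∃ q z, q 0 = p ∧ z 0 = v ∧ A.IsZeroAvoiding n q z) → (n : ℝ) ≤ a * m := by
    rintro p v hv n ⟨q, z, hq0, hz0, hza⟩
    rcases Nat.eq_zero_or_pos n with rfl | hn1
    · simpa using mul_nonneg ha.le (by positivity : (0:ℝ) ≤ (m:ℕ))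
    set u : ℕ → Fin d → ℤ := fun j i => (z (j+1) i : ℤ) - z j i with hu
    have hpath : A.IsPath n q u := ⟨hn1, hza.2⟩
    have hkey := my_key A nv hpos hε hInc n q u hpath
    -- telescoping
    set F : ℕ → ℝ := fun j => ∑ i, (z j i : ℝ) * nv i with hF
    have hstep : ∀ j, VASS.dotZ (u j) nv = F (j+1) - F j := by
      intro j
      rw [VASS.dotZ, hF]
      rw [← Finset.sum_sub_distrib]
      apply Finset.sum_congr rfl
      intro i _
      rw [hu]
      push_cast
      ring
    have htel : ∑ j ∈ Finset.range n, VASS.dotZ (u j) nv = F n - F 0 := by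
      simp_rw [hstep]
      exact Finset.sum_range_sub F n
    have hFn : 0 ≤ F n := Finset.sum_nonneg fun i _ =>
      mul_nonneg (by positivity) (hpos i).le
    have hF0 : F 0 ≤ m * C := by
      rw [hF, hC]
      rw [Finset.mul_sum]
      apply Finset.sum_le_sum
      intro i _
      have : v i ≤ m := hv ▸ Finset.le_sup (Finset.mem_univ i)
      have hvi : ((z 0 i : ℕ) : ℝ) ≤ m := by
        rw [hz0]; exact_mod_cast this
      exact mul_le_mul_of_nonneg_right hvi (hpos i).le
    have hS : -(m * C) ≤ ∑ j ∈ Finset.range n, VASS.dotZ (u j) nv := by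
      rw [htel]; linarith
    -- combine
    have h2 : ε * n ≤ (Nat.card Q : ℝ)^2 * C + Nat.card Q * ε + Nat.card Q * (m * C) := by
      nlinarith [mul_le_mul_of_nonneg_left hS hK0]
    have h3 : (n : ℝ) ≤ (((Nat.card Q : ℝ)^2 * C + Nat.card Q * ε + Nat.card Q * C)/ε) * m := by
      rw [div_mul_eq_mul_div, le_div_iff₀ hε]
      nlinarith [mul_nonneg (mul_nonneg hK0 hC0) (sub_nonneg.mpr hm1),
        mul_nonneg hK0 (mul_nonneg hε.le (sub_nonneg.mpr hm1)),
        mul_nonneg (mul_nonneg (mul_nonneg hK0 hK0) hC0) (sub_nonneg.mpr hm1)]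
    calc (n:ℝ) ≤ _ := h3
      _ ≤ a * m := by
        apply mul_le_mul_of_nonneg_right _ (by positivity)
        rw [ha_def]; linarith
  have hL : A.L m ≤ (⌊a * m⌋₊ : ℕ∞) := by
    rw [VASS.L]
    refine iSup_le fun p => iSup_le fun v => iSup_le fun hv => ?_
    rw [VASS.Lval]
    refine iSup_le fun n => iSup_le fun hex => ?_
    exact Nat.cast_le.mpr (Nat.le_floor (main p v hv n hex))
  calc (A.L m : ℝ≥0∞) ≤ ((⌊a * m⌋₊ : ℕ∞) : ℝ≥0∞) := by exact_mod_cast ENat.toENNReal_le.mpr hL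
    _ = ((⌊a * m⌋₊ : ℕ) : ℝ≥0∞) := by simp
    _ ≤ ENNReal.ofReal (a * m) := by
        rw [← ENNReal.ofReal_natCast]
        exact ENNReal.ofReal_le_ofReal (Nat.floor_le (mul_nonneg ha.le (Nat.cast_nonneg m)))
end

section
/- Let A = (Q,T) be a d-dimensional VASS. Then 𝓛_A(n) ∈ O(n) if and only if for every strongly connected component R of A, the termination complexity 𝓛_R(n) of the restricted VASS A_R is in O(n). -/
open scoped BigOperators ENNReal

namespace VASS

variable {d : ℕ} {Q : Type}

section Aux
variable {d : ℕ} {Q : Type}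

lemma Reaches.trans {A : VASS d Q} {p q r : Q} (h1 : A.Reaches p q) (h2 : A.Reaches q r) :
    A.Reaches p r := by
  obtain ⟨n1, p1, u1, ⟨hn1, h1'⟩, hs1, he1⟩ := h1
  obtain ⟨n2, p2, u2, ⟨hn2, h2'⟩, hs2, he2⟩ := h2
  refine ⟨n1 + n2, fun i => if i < n1 then p1 i else p2 (i - n1),
    fun i => if i < n1 then u1 i else u2 (i - n1), ⟨by omega, ?_⟩, ?_, ?_⟩
  · intro i hi
    by_cases h : i < n1
    · by_cases h' : i + 1 < n1
      · simp only [if_pos h, if_pos h']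
        exact h1' i h
      · have e : i + 1 = n1 := by omega
        have e2 : i + 1 - n1 = 0 := by omega
        simp only [if_pos h, if_neg h', e2, hs2]
        rw [← he1, ← e]
        exact h1' i h
    · have e : i + 1 - n1 = (i - n1) + 1 := by omega
      simp only [if_neg h, if_neg (show ¬ i + 1 < n1 by omega), e]
      exact h2' (i - n1) (by omega)
  · simp only [if_pos (show 0 < n1 by omega), hs1]
  · simp only [if_neg (show ¬ n1 + n2 < n1 by omega),
      show n1 + n2 - n1 = n2 from by omega, he2]

lemma reaches_of_comp (A : VASS d Q) {n : ℕ} {q : ℕ → Q} {z : ℕ → Fin d → ℕ}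
    (h : A.IsZeroAvoiding n q z) {i j : ℕ} (hij : i < j) (hj : j ≤ n) :
    A.Reaches (q i) (q j) := by
  refine ⟨j - i, fun t => q (i + t), fun t k => (z (i + t + 1) k : ℤ) - z (i + t) k,
    ⟨by omega, ?_⟩, by simp, congrArg q (by omega)⟩
  intro t ht
  exact h.2 (i + t) (by omega)

/-- The SCC containing `p`. -/
def sccOf (A : VASS d Q) (p : Q) : Set Q :=
  {q | q = p ∨ (A.Reaches p q ∧ A.Reaches q p)}

lemma mem_sccOf_self (A : VASS d Q) (p : Q) : p ∈ A.sccOf p := Or.inl rfl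

lemma mem_sccOf (A : VASS d Q) {p q : Q} :
    q ∈ A.sccOf p ↔ (q = p ∨ (A.Reaches p q ∧ A.Reaches q p)) := Iff.rfl

lemma sccOf_reach {A : VASS d Q} {p q r : Q} (hq : q ∈ A.sccOf p) (hr : r ∈ A.sccOf p)
    (hne : q ≠ r) : A.Reaches q r := by
  rcases hq with rfl | ⟨hpq, hqp⟩
  · rcases hr with rfl | ⟨hpr, hrp⟩
    · exact absurd rfl hne
    · exact hpr
  · rcases hr with rfl | ⟨hpr, hrp⟩
    · exact hqp
    · exact hqp.trans hpr

lemma isSCC_sccOf (A : VASS d Q) (p : Q) : A.IsSCC (A.sccOf p) := by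
  constructor
  · intro q hq r hr hne
    exact sccOf_reach hq hr hne
  · intro S hsub hS
    apply Set.Subset.antisymm _ hsub
    intro s hs
    by_cases hsp : s = p
    · exact Or.inl hsp
    · exact Or.inr ⟨hS p (hsub (A.mem_sccOf_self p)) s hs (Ne.symm hsp),
        hS s hs p (hsub (A.mem_sccOf_self p)) hsp⟩

lemma shift_comp (A : VASS d Q) {n : ℕ} {q : ℕ → Q} {z : ℕ → Fin d → ℕ}
    (h : A.IsZeroAvoiding n q z) (c : ℕ) :
    A.IsZeroAvoiding n q (fun t i => z t i + c) := by
  constructor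
  · intro i hi j
    have := h.1 i hi j
    show 0 < z i j + c
    omega
  · intro i hi
    have h2 := h.2 i hi
    have e : (fun j => (((z (i+1) j + c : ℕ) : ℤ)) - ((z i j + c : ℕ) : ℤ))
        = fun j => ((z (i+1) j : ℤ)) - ((z i j : ℤ)) := by
      funext j; push_cast; ring
    simpa only [e] using h2

lemma step_le (A : VASS d Q) {n : ℕ} {q : ℕ → Q} {z : ℕ → Fin d → ℕ}
    (h : A.IsZeroAvoiding n q z) {i : ℕ} (hi : i < n) (j : Fin d) :
    z (i+1) j ≤ z i j + 1 := by
  have h2 := h.2 i hi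
  have h3 := A.upd_mem _ h2 j
  simp only at h3
  rcases h3 with h3 | h3 | h3 <;> omega

lemma size_le (A : VASS d Q) {n : ℕ} {q : ℕ → Q} {z : ℕ → Fin d → ℕ}
    (h : A.IsZeroAvoiding n q z) {t : ℕ} (ht : t ≤ n) (j : Fin d) :
    z t j ≤ z 0 j + t := by
  induction t with
  | zero => omega
  | succ k ihk =>
      have h1 := A.step_le h (show k < n by omega) j
      have h2 := ihk (by omega)
      omega

lemma sup_size_le (A : VASS d Q) {n : ℕ} {q : ℕ → Q} {z : ℕ → Fin d → ℕ}
    (h : A.IsZeroAvoiding n q z) {t : ℕ} (ht : t ≤ n) :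
    Finset.univ.sup (z t) ≤ Finset.univ.sup (z 0) + t := by
  apply Finset.sup_le
  intro j _
  exact le_trans (A.size_le h ht j) (by
    have : z 0 j ≤ Finset.univ.sup (z 0) := Finset.le_sup (Finset.mem_univ j)
    omega)

lemma sup_add (hd : 0 < d) (v : Fin d → ℕ) (c : ℕ) :
    Finset.univ.sup (fun i => v i + c) = Finset.univ.sup v + c := by
  have hne : (Finset.univ : Finset (Fin d)).Nonempty := ⟨⟨0, hd⟩, Finset.mem_univ _⟩
  apply le_antisymm
  · apply Finset.sup_le
    intro i _
    have : v i ≤ Finset.univ.sup v := Finset.le_sup (Finset.mem_univ i)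
    omega
  · obtain ⟨i, -, hi⟩ := Finset.exists_mem_eq_sup _ hne v
    calc Finset.univ.sup v + c = v i + c := by rw [hi]
    _ ≤ _ := Finset.le_sup (f := fun i => v i + c) (Finset.mem_univ i)

lemma le_L (A : VASS d Q) {n : ℕ} {q : ℕ → Q} {z : ℕ → Fin d → ℕ}
    (h : A.IsZeroAvoiding n q z) : (n : ℕ∞) ≤ A.L (Finset.univ.sup (z 0)) := by
  have h1 : (n : ℕ∞) ≤ A.Lval (q 0) (z 0) := by
    rw [VASS.Lval]
    have hP : ∃ qq zz, qq 0 = q 0 ∧ zz 0 = z 0 ∧ A.IsZeroAvoiding n qq zz := ⟨q, z, rfl, rfl, h⟩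
    calc (n : ℕ∞) ≤ ⨆ (_ : ∃ qq zz, qq 0 = q 0 ∧ zz 0 = z 0 ∧ A.IsZeroAvoiding n qq zz),
        (n : ℕ∞) := le_iSup (fun _ => (n : ℕ∞)) hP
    _ ≤ _ := le_iSup (fun nn => ⨆ (_ : ∃ qq zz, qq 0 = q 0 ∧ zz 0 = z 0 ∧
        A.IsZeroAvoiding nn qq zz), (nn : ℕ∞)) n
  refine h1.trans ?_
  rw [VASS.L]
  calc A.Lval (q 0) (z 0)
      ≤ ⨆ (_ : Finset.univ.sup (z 0) = Finset.univ.sup (z 0)), A.Lval (q 0) (z 0) :=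
        le_iSup (fun _ => A.Lval (q 0) (z 0)) rfl
  _ ≤ ⨆ (v : Fin d → ℕ) (_ : Finset.univ.sup v = Finset.univ.sup (z 0)), A.Lval (q 0) v :=
        le_iSup (fun v => ⨆ (_ : Finset.univ.sup v = Finset.univ.sup (z 0)), A.Lval (q 0) v) (z 0)
  _ ≤ _ := le_iSup (fun p => ⨆ (v : Fin d → ℕ) (_ : Finset.univ.sup v = Finset.univ.sup (z 0)),
        A.Lval p v) (q 0)

lemma segment_bound (A : VASS d Q) (hd : 0 < d) {a : ℝ} {N : ℕ} (ha : 0 ≤ a)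
    (hL : ∀ m : ℕ, N ≤ m → ((A.L m : ℝ≥0∞)) ≤ ENNReal.ofReal (a * m))
    {n : ℕ} {q : ℕ → Q} {z : ℕ → Fin d → ℕ} (hza : A.IsZeroAvoiding n q z) :
    (n : ℝ) ≤ a * ((Finset.univ.sup (z 0) : ℕ) + N) := by
  set m := Finset.univ.sup (z 0) with hm
  set c := N - m with hc
  have hshift := A.shift_comp hza c
  have h1 : (n : ℕ∞) ≤ A.L (m + c) := by
    have := A.le_L hshift
    rwa [show Finset.univ.sup ((fun t i => z t i + c) 0) = m + c from sup_add hd (z 0) c] at this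
  have h2 := hL (m + c) (by omega)
  have h3 : (n : ℝ≥0∞) ≤ ENNReal.ofReal (a * ((m : ℝ) + (c : ℝ))) := by
    have e : ((m + c : ℕ) : ℝ) = (m : ℝ) + (c : ℝ) := by push_cast; ring
    rw [← e]
    calc (n : ℝ≥0∞) = ((n : ℕ∞) : ℝ≥0∞) := by exact_mod_cast rfl
    _ ≤ _ := le_trans (by exact_mod_cast h1) h2
  rw [← ENNReal.ofReal_natCast n] at h3
  have h4 : (n : ℝ) ≤ a * ((m : ℝ) + (c : ℝ)) :=
    (ENNReal.ofReal_le_ofReal_iff (by positivity)).mp h3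
  have h5 : (c : ℝ) ≤ (N : ℝ) := by
    have : c ≤ N := by omega
    exact_mod_cast this
  calc (n : ℝ) ≤ a * ((m : ℝ) + (c : ℝ)) := h4
  _ ≤ a * ((m : ℝ) + N) := mul_le_mul_of_nonneg_left (by linarith) ha


open scoped Classical in
lemma main_bound [Fintype Q] (A : VASS d Q) (hd : 0 < d) {a : ℝ} {N : ℕ}
    (ha : 1 ≤ a) (hN : 1 ≤ N)
    (hscc : ∀ R : Set Q, A.IsSCC R → ∀ m : ℕ, N ≤ m →
      (((A.restrict R).L m : ℝ≥0∞)) ≤ ENNReal.ofReal (a * m)) :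
    ∀ s : ℕ, ∀ n : ℕ, ∀ q : ℕ → Q, ∀ z : ℕ → Fin d → ℕ,
      A.IsZeroAvoiding n q z → ((Finset.range (n+1)).image q).card ≤ s →
      (n : ℝ) ≤ (2*a+3)^s * (((Finset.univ.sup (z 0) : ℕ) : ℝ) + N + 1) := by
  intro s
  induction s with
  | zero =>
      intro n q z hza hcard
      exfalso
      have : q 0 ∈ (Finset.range (n+1)).image q :=
        Finset.mem_image.mpr ⟨0, Finset.mem_range.mpr (by omega), rfl⟩
      have := Finset.card_pos.mpr ⟨_, this⟩
      omega
  | succ s ih =>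
      intro n q z hza hcard
      set m := Finset.univ.sup (z 0) with hm
      set R := A.sccOf (q 0) with hRdef
      have hRscc : A.IsSCC R := A.isSCC_sccOf (q 0)
      set F := (Finset.range (n+1)).filter (fun t => q t ∈ R) with hF
      have hF0 : 0 ∈ F := by
        rw [hF, Finset.mem_filter]
        exact ⟨Finset.mem_range.mpr (by omega), A.mem_sccOf_self (q 0)⟩
      have hFne : F.Nonempty := ⟨0, hF0⟩
      set j := F.max' hFne with hj
      have hjmem : j ∈ F := F.max'_mem hFne
      have hjn : j ≤ n := by
        have := (Finset.mem_filter.mp hjmem).1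
        rw [Finset.mem_range] at this
        omega
      have hjR : q j ∈ R := (Finset.mem_filter.mp hjmem).2
      -- positivity facts
      have hB1 : (1 : ℝ) ≤ 2*a+3 := by linarith
      have hP1 : (1 : ℝ) ≤ (2*a+3)^s := one_le_pow₀ hB1
      have hNr : (1 : ℝ) ≤ (N : ℝ) := by exact_mod_cast hN
      have hmr : (0 : ℝ) ≤ (m : ℝ) := Nat.cast_nonneg m
      -- no return to R before j
      have hpre : ∀ t ≤ j, q t ∈ R := by
        intro t ht
        by_contra hqt
        have ht0 : 0 < t := by
          rcases Nat.eq_zero_or_pos t with h0 | h0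
          · exact absurd (h0 ▸ A.mem_sccOf_self (q 0)) (h0 ▸ hqt)
          · exact h0
        have htj : t < j := lt_of_le_of_ne ht (fun h => hqt (h ▸ hjR))
        have h1 : A.Reaches (q 0) (q t) := A.reaches_of_comp hza ht0 (by omega)
        have h2 : A.Reaches (q t) (q j) := A.reaches_of_comp hza htj hjn
        have h3 : A.Reaches (q t) (q 0) := by
          rcases (A.mem_sccOf).mp hjR with he | ⟨hr1, hr2⟩
          · exact he ▸ h2
          · exact h2.trans hr2
        exact hqt (Or.inr ⟨h1, h3⟩)
      -- prefix bound
      have hjb : (j : ℝ) ≤ a * ((m : ℝ) + N) := by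
        rcases Nat.eq_zero_or_pos j with h0 | h0
        · rw [h0]; push_cast; positivity
        · set q' : ℕ → R := fun t => ⟨q (min t j), hpre _ (min_le_right t j)⟩ with hq'
          set z' : ℕ → Fin d → ℕ := fun t => z (min t j) with hz'
          have hza' : (A.restrict R).IsZeroAvoiding j q' z' := by
            constructor
            · intro i hi k
              exact hza.1 (min i j) (le_trans (min_le_right i j) hjn) k
            · intro i hi
              have e1 : min i j = i := min_eq_left (by omega)
              have e2 : min (i+1) j = i + 1 := min_eq_left (by omega)
              show ((q (min i j)), (fun k => ((z (min (i+1) j) k : ℤ)) - ((z (min i j) k : ℤ))),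
                q (min (i+1) j)) ∈ A.T
              rw [e1, e2]
              exact hza.2 i (by omega)
          have hseg := (A.restrict R).segment_bound hd (by linarith)
            (fun mm hmm => hscc R hRscc mm hmm) hza'
          have e0 : Finset.univ.sup (z' 0) = m := by
            rw [hz']
            simp only [Nat.min_eq_left (Nat.zero_le j), hm]
          rw [e0] at hseg
          exact hseg
      rcases eq_or_lt_of_le hjn with heq | hlt
      · -- j = n : done with the prefix bound
        rw [← heq]
        have h1 : a * ((m:ℝ) + N) ≤ (2*a+3) * ((m:ℝ) + N + 1) := by nlinarith
        have h2 : (2*a+3) * ((m:ℝ) + N + 1) ≤ (2*a+3)^(s+1) * ((m:ℝ) + N + 1) := by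
          have : (2*a+3) ≤ (2*a+3)^(s+1) := by
            calc (2*a+3) = (2*a+3) * 1 := (mul_one _).symm
            _ ≤ (2*a+3)^s * (2*a+3) := by nlinarith
            _ = (2*a+3)^(s+1) := (pow_succ (2*a+3) s).symm
          nlinarith
        linarith
      · -- suffix
        set q2 : ℕ → Q := fun t => q (j+1+t) with hq2
        set z2 : ℕ → Fin d → ℕ := fun t => z (j+1+t) with hz2
        have hza2 : A.IsZeroAvoiding (n - (j+1)) q2 z2 := by
          constructor
          · intro i hi k
            exact hza.1 (j+1+i) (by omega) k
          · intro i hi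
            exact hza.2 (j+1+i) (by omega)
        have hnotin : ∀ t, j < t → t ≤ n → q t ∉ R := by
          intro t h1 h2 hmem
          have : t ∈ F := by
            rw [hF, Finset.mem_filter]
            exact ⟨Finset.mem_range.mpr (by omega), hmem⟩
          have := F.le_max' t this
          omega
        have hsub : (Finset.range (n - (j+1) + 1)).image q2 ⊆
            ((Finset.range (n+1)).image q).erase (q 0) := by
          intro x hx
          obtain ⟨t, ht, rfl⟩ := Finset.mem_image.mp hx
          rw [Finset.mem_range] at ht
          refine Finset.mem_erase.mpr ⟨?_, Finset.mem_image.mpr ⟨j+1+t,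
            Finset.mem_range.mpr (by omega), rfl⟩⟩
          intro hq0
          have hmem : q (j+1+t) ∈ R := by
            rw [show q (j+1+t) = q2 t from rfl, hq0]
            exact A.mem_sccOf_self (q 0)
          exact hnotin (j+1+t) (by omega) (by omega) hmem
        have hcard2 : ((Finset.range (n - (j+1) + 1)).image q2).card ≤ s := by
          have h1 := Finset.card_le_card hsub
          have h2 : (((Finset.range (n+1)).image q).erase (q 0)).card
              = ((Finset.range (n+1)).image q).card - 1 :=
            Finset.card_erase_of_mem (Finset.mem_image.mpr
              ⟨0, Finset.mem_range.mpr (by omega), rfl⟩)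
          omega
        have hIH := ih (n - (j+1)) q2 z2 hza2 hcard2
        have hsz : ((Finset.univ.sup (z2 0) : ℕ) : ℝ) ≤ (m : ℝ) + (j : ℝ) + 1 := by
          have h1 : Finset.univ.sup (z2 0) ≤ m + (j + 1) := by
            have := A.sup_size_le hza (show j + 1 ≤ n by omega)
            simpa [hz2] using this
          exact_mod_cast by exact_mod_cast (by exact_mod_cast Nat.cast_le.mpr h1 :
            ((Finset.univ.sup (z2 0) : ℕ) : ℝ) ≤ ((m + (j+1) : ℕ) : ℝ))
        have hnn : ((n - (j+1) : ℕ) : ℝ) = (n : ℝ) - (j : ℝ) - 1 := by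
          have : (n : ℝ) = ((j + 1 : ℕ) : ℝ) + ((n - (j+1) : ℕ) : ℝ) := by
            exact_mod_cast congrArg (Nat.cast : ℕ → ℝ) (by omega :
              n = (j + 1) + (n - (j+1)))
          push_cast at this
          linarith
        have hIH2 : (n : ℝ) - (j : ℝ) - 1 ≤ (2*a+3)^s * ((m : ℝ) + (j : ℝ) + 1 + N + 1) := by
          rw [← hnn]
          calc ((n - (j+1) : ℕ) : ℝ) ≤ (2*a+3)^s * (((Finset.univ.sup (z2 0) : ℕ) : ℝ) + N + 1)
              := hIH
          _ ≤ _ := by nlinarith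
        -- final arithmetic
        have hpow : (2*a+3)^(s+1) = (2*a+3)^s * (2*a+3) := pow_succ (2*a+3) s
        nlinarith [mul_le_mul_of_nonneg_left hjb (le_trans zero_le_one hP1 :
            (0:ℝ) ≤ (2*a+3)^s), hP1, hjb, hB1, hNr, hmr,
          mul_le_mul_of_nonneg_right hP1 (show (0:ℝ) ≤ a * ((m:ℝ)+N) + 1 by nlinarith)]

lemma restrict_L_le [Fintype Q] (A : VASS d Q) (R : Set Q) (m : ℕ) :
    (A.restrict R).L m ≤ A.L m := by
  rw [VASS.L, VASS.L]
  refine iSup_le fun p => iSup_le fun v => iSup_le fun hv => ?_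
  have h1 : (A.restrict R).Lval p v ≤ A.Lval (p : Q) v := by
    rw [VASS.Lval, VASS.Lval]
    refine iSup_le fun n => iSup_le fun hex => ?_
    obtain ⟨qq, zz, h0, hz, hcomp⟩ := hex
    have hex2 : ∃ q z, q 0 = (p : Q) ∧ z 0 = v ∧ A.IsZeroAvoiding n q z :=
      ⟨fun i => (qq i : Q), zz, congrArg Subtype.val h0, hz, ⟨hcomp.1, fun i hi => hcomp.2 i hi⟩⟩
    calc (n : ℕ∞) ≤ ⨆ (_ : ∃ q z, q 0 = (p : Q) ∧ z 0 = v ∧ A.IsZeroAvoiding n q z),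
        (n : ℕ∞) := le_iSup (fun _ => (n : ℕ∞)) hex2
    _ ≤ _ := le_iSup (fun nn => ⨆ (_ : ∃ q z, q 0 = (p : Q) ∧ z 0 = v ∧
        A.IsZeroAvoiding nn q z), (nn : ℕ∞)) n
  refine h1.trans ?_
  calc A.Lval (p : Q) v
      ≤ ⨆ (_ : Finset.univ.sup v = m), A.Lval (p : Q) v :=
        le_iSup (fun _ : Finset.univ.sup v = m => A.Lval (p : Q) v) hv
  _ ≤ ⨆ (v' : Fin d → ℕ) (_ : Finset.univ.sup v' = m), A.Lval (p : Q) v' :=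
      le_iSup (fun v' => ⨆ (_ : Finset.univ.sup v' = m), A.Lval (p : Q) v') v
  _ ≤ _ := le_iSup (fun pp => ⨆ (v' : Fin d → ℕ) (_ : Finset.univ.sup v' = m),
      A.Lval pp v') (p : Q)

end Aux
end VASS


/-- `𝓛_A(n) ∈ O(n)` iff for every SCC `R` of `A`, the termination
complexity of the restricted VASS `A_R` is in `O(n)`. -/
theorem stmt2 {d : ℕ} {Q : Type} [Fintype Q] [Nonempty Q] (A : VASS d Q) :
    (∃ a : ℝ, 0 < a ∧ ∃ N : ℕ, ∀ m : ℕ, N ≤ m →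
        (A.L m : ℝ≥0∞) ≤ ENNReal.ofReal (a * m)) ↔
    (∀ R : Set Q, A.IsSCC R →
        ∃ a : ℝ, 0 < a ∧ ∃ N : ℕ, ∀ m : ℕ, N ≤ m →
          ((A.restrict R).L m : ℝ≥0∞) ≤ ENNReal.ofReal (a * m)) := by
  classical
  constructor
  · rintro ⟨a, ha, N, hLa⟩ R hR
    exact ⟨a, ha, N, fun m hm =>
      le_trans (by exact_mod_cast A.restrict_L_le R m) (hLa m hm)⟩
  · intro h
    by_cases hd : 0 < d
    · choose a0 ha0 N0 hN0 using h
      set S : Finset (Set Q) := Finset.univ.filter (fun R => A.IsSCC R) with hS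
      set a : ℝ := 1 + ∑ R ∈ S, (if hr : A.IsSCC R then a0 R hr else 0) with ha
      set N : ℕ := 1 + ∑ R ∈ S, (if hr : A.IsSCC R then N0 R hr else 0) with hN
      have hsum0 : (0:ℝ) ≤ ∑ R ∈ S, (if hr : A.IsSCC R then a0 R hr else 0) :=
        Finset.sum_nonneg (fun R _ => by
          by_cases hr : A.IsSCC R
          · rw [dif_pos hr]; exact le_of_lt (ha0 R hr)
          · rw [dif_neg hr])
      have ha1 : 1 ≤ a := by rw [ha]; linarith
      have hN1 : 1 ≤ N := by omega
      have hsccU : ∀ R : Set Q, A.IsSCC R → ∀ m : ℕ, N ≤ m →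
          ((A.restrict R).L m : ℝ≥0∞) ≤ ENNReal.ofReal (a * m) := by
        intro R hR m hm
        have hRS : R ∈ S := Finset.mem_filter.mpr ⟨Finset.mem_univ R, hR⟩
        have hNR : N0 R hR ≤ N := by
          have h1 : (if hr : A.IsSCC R then N0 R hr else 0)
              ≤ ∑ R' ∈ S, (if hr : A.IsSCC R' then N0 R' hr else 0) :=
            Finset.single_le_sum (f := fun R' => if hr : A.IsSCC R' then N0 R' hr else 0)
              (fun i _ => Nat.zero_le _) hRS
          rw [dif_pos hR] at h1
          omega
        have haR : a0 R hR ≤ a := by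
          have h1 : (if hr : A.IsSCC R then a0 R hr else 0)
              ≤ ∑ R' ∈ S, (if hr : A.IsSCC R' then a0 R' hr else 0) :=
            Finset.single_le_sum (f := fun R' => if hr : A.IsSCC R' then a0 R' hr else 0)
              (fun R' _ => by
              show (0:ℝ) ≤ if hr : A.IsSCC R' then a0 R' hr else 0
              by_cases hr : A.IsSCC R'
              · rw [dif_pos hr]; exact le_of_lt (ha0 R' hr)
              · rw [dif_neg hr]) hRS
          rw [dif_pos hR] at h1
          rw [ha]; linarith
        refine le_trans (hN0 R hR m (le_trans hNR hm)) ?_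
        exact ENNReal.ofReal_le_ofReal
          (mul_le_mul_of_nonneg_right haR (Nat.cast_nonneg m))
      have hmain := A.main_bound hd ha1 hN1 hsccU (Fintype.card Q)
      refine ⟨(2*a+3)^(Fintype.card Q) * ((N : ℝ) + 2), by positivity, 1, fun m hm => ?_⟩
      have hbound : ∀ (n : ℕ) (q : ℕ → Q) (z : ℕ → Fin d → ℕ), A.IsZeroAvoiding n q z →
          Finset.univ.sup (z 0) = m →
          (n : ℝ) ≤ (2*a+3)^(Fintype.card Q) * ((N : ℝ) + 2) * m := by
        intro n q z hza hsup
        have hcard : ((Finset.range (n+1)).image q).card ≤ Fintype.card Q :=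
          Finset.card_le_univ _
        have h1 := hmain n q z hza hcard
        rw [hsup] at h1
        have hm1 : (1:ℝ) ≤ (m : ℝ) := by exact_mod_cast hm
        have hNr : (0:ℝ) ≤ (N : ℝ) := Nat.cast_nonneg N
        have h2 : ((m : ℝ) + N + 1) ≤ ((N : ℝ) + 2) * m := by nlinarith
        have hpp : (0:ℝ) ≤ (2*a+3)^(Fintype.card Q) := by positivity
        calc (n : ℝ) ≤ (2*a+3)^(Fintype.card Q) * ((m : ℝ) + N + 1) := h1
        _ ≤ (2*a+3)^(Fintype.card Q) * (((N : ℝ) + 2) * m) :=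
            mul_le_mul_of_nonneg_left h2 hpp
        _ = _ := by ring
      set C : ℝ := (2*a+3)^(Fintype.card Q) * ((N : ℝ) + 2) with hC
      have hC0 : (0:ℝ) ≤ C * m := by positivity
      have hLK : A.L m ≤ ((Nat.floor (C * m) : ℕ) : ℕ∞) := by
        rw [VASS.L]
        refine iSup_le fun p => iSup_le fun v => iSup_le fun hv => ?_
        rw [VASS.Lval]
        refine iSup_le fun n => iSup_le fun hex => ?_
        obtain ⟨q, z, h0, hz, hza⟩ := hex
        have := hbound n q z hza (by rw [hz]; exact hv)
        exact_mod_cast Nat.le_floor this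
      calc (A.L m : ℝ≥0∞) ≤ ((Nat.floor (C * m) : ℕ) : ℝ≥0∞) := by exact_mod_cast hLK
      _ = ENNReal.ofReal ((Nat.floor (C * m) : ℕ) : ℝ) := (ENNReal.ofReal_natCast _).symm
      _ ≤ ENNReal.ofReal (C * m) := ENNReal.ofReal_le_ofReal (Nat.floor_le hC0)
    · refine ⟨1, one_pos, 1, fun m hm => ?_⟩
      have hL0 : A.L m ≤ (0 : ℕ∞) := by
        rw [VASS.L]
        refine iSup_le fun p => iSup_le fun v => iSup_le fun hv => ?_
        exfalso
        have hd0 : d = 0 := by omega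
        subst hd0
        rw [Finset.univ_eq_empty, Finset.sup_empty] at hv
        simp only [bot_eq_zero] at hv
        omega
      calc (A.L m : ℝ≥0∞) ≤ (((0:ℕ) : ℕ∞) : ℝ≥0∞) := by exact_mod_cast hL0
      _ ≤ _ := by
          simp only [Nat.cast_zero, ENat.toENNReal_zero]
          exact zero_le
end

section
/- Let V ⊆ ℝ^d be a finite set of vectors. If there is no nonzero componentwise non-negative vector n ∈ ℝ^d with v · n ≤ 0 for all v ∈ V, then there exists a componentwise positive vector u ∈ cone(V). -/
open scoped BigOperators

/-- Scalar product of two real vectors. -/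
def dotR {d : ℕ} (v w : Fin d → ℝ) : ℝ := ∑ i, v i * w i

/-- The cone generated by a finite set of real vectors: all non-negative
linear combinations of elements of `V`. -/
def coneF {d : ℕ} (V : Finset (Fin d → ℝ)) : Set (Fin d → ℝ) :=
  { x | ∃ c : (Fin d → ℝ) → ℝ, (∀ v ∈ V, 0 ≤ c v) ∧ x = ∑ v ∈ V, c v • v }

lemma coneF_convex {d : ℕ} (V : Finset (Fin d → ℝ)) : Convex ℝ (coneF V) := by
  rintro x ⟨c, hc, rfl⟩ y ⟨c', hc', rfl⟩ a b ha hb hab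
  refine ⟨fun v => a * c v + b * c' v, fun v hv =>
    add_nonneg (mul_nonneg ha (hc v hv)) (mul_nonneg hb (hc' v hv)), ?_⟩
  rw [Finset.smul_sum, Finset.smul_sum, ← Finset.sum_add_distrib]
  exact Finset.sum_congr rfl fun v _ => by rw [add_smul, smul_smul, smul_smul]

lemma coneF_smul_mem {d : ℕ} (V : Finset (Fin d → ℝ)) {t : ℝ} (ht : 0 ≤ t)
    {v : Fin d → ℝ} (hv : v ∈ V) : t • v ∈ coneF V := by
  refine ⟨fun w => if w = v then t else 0, fun w _ => by positivity, ?_⟩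
  have hterm : ∀ w ∈ V, (if w = v then t else 0) • w = if w = v then t • v else 0 := by
    intro w _
    split <;> simp_all
  rw [Finset.sum_congr rfl hterm, Finset.sum_ite_eq' V v fun _ => t • v]
  simp [hv]

/-- if there is no nonzero componentwise non-negative `n` with
`v · n ≤ 0` on `V`, then `cone(V)` contains a componentwise positive vector. -/
theorem stmt9 {d : ℕ} (V : Finset (Fin d → ℝ))
    (h : ¬ ∃ n : Fin d → ℝ, n ≠ 0 ∧ (∀ i, 0 ≤ n i) ∧ ∀ v ∈ V, dotR v n ≤ 0) :
    ∃ u ∈ coneF V, ∀ i, 0 < u i := by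
  by_contra hu
  apply h
  -- the open positive orthant
  set P : Set (Fin d → ℝ) := Set.univ.pi fun _ => Set.Ioi (0:ℝ) with hP
  have hPo : IsOpen P := isOpen_set_pi Set.finite_univ fun i _ => isOpen_Ioi
  have hPc : Convex ℝ P := convex_pi fun i _ => convex_Ioi 0
  have hmemP : ∀ x : Fin d → ℝ, (∀ i, 0 < x i) → x ∈ P := by
    intro x hx
    simp [hP, Set.mem_pi, hx]
  have hdisj : Disjoint P (coneF V) := by
    rw [Set.disjoint_left]
    intro x hxP hxK
    exact hu ⟨x, hxK, fun i => by
      have := hxP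
      simp [hP, Set.mem_pi] at this
      exact this i⟩
  obtain ⟨f, u0, hfP, hfK⟩ := geometric_hahn_banach_open hPc hPo (coneF_convex V) hdisj
  have h0K : (0 : Fin d → ℝ) ∈ coneF V := ⟨fun _ => 0, fun _ _ => le_refl _, by simp⟩
  have hu0 : u0 ≤ 0 := by simpa using hfK 0 h0K
  -- f is nonnegative on V
  have hfV : ∀ v ∈ V, 0 ≤ f v := by
    intro v hv
    by_contra hneg
    push_neg at hneg
    have ht : (0:ℝ) ≤ (u0 - 1) / f v := by
      exact le_of_lt (div_pos_of_neg_of_neg (by linarith) hneg)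
    have := hfK _ (coneF_smul_mem V ht hv)
    rw [map_smul, smul_eq_mul, div_mul_cancel₀ _ (ne_of_lt hneg)] at this
    linarith
  -- all-ones vector
  have hones : f (fun _ => (1:ℝ)) < u0 := hfP _ (hmemP _ fun i => one_pos)
  -- f is nonpositive on basis vectors
  have hfe : ∀ i, f (Pi.single i (1:ℝ)) ≤ 0 := by
    intro i
    by_contra hpos
    push_neg at hpos
    set t : ℝ := (1 - f (fun _ => (1:ℝ))) / f (Pi.single i 1) with htdef
    have ht : 0 < t := div_pos (by linarith) hpos
    have hx : (t • (Pi.single i 1 : Fin d → ℝ) + fun _ => (1:ℝ)) ∈ P := by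
      apply hmemP
      intro j
      simp only [Pi.add_apply, Pi.smul_apply, smul_eq_mul]
      rcases eq_or_ne j i with rfl | hne
      · simp; linarith
      · simp [Pi.single_apply, hne]
    have := hfP _ hx
    rw [map_add, map_smul, smul_eq_mul, htdef, div_mul_cancel₀ _ (ne_of_gt hpos)] at this
    linarith
  refine ⟨fun i => -f (Pi.single i 1), ?_, fun i => by simpa using hfe i, ?_⟩
  · -- n ≠ 0
    intro h0
    have hz : ∀ i, f (Pi.single i (1:ℝ)) = 0 := by
      intro i
      have := congrFun h0 i
      simpa [neg_eq_zero] using this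
    have : f (fun _ => (1:ℝ)) = 0 := by
      have hsum : (fun _ => (1:ℝ)) = ∑ i : Fin d, Pi.single i (1:ℝ) := by
        ext j
        simp [Pi.single_apply]
      rw [hsum, map_sum]
      simp [hz]
    linarith
  · -- dot products
    intro v hv
    have hfv : f v = ∑ i, v i * f (Pi.single i 1) := by
      have hsum : v = ∑ i : Fin d, v i • (Pi.single i 1 : Fin d → ℝ) := by
        ext j
        simp [Pi.single_apply]
      conv_lhs => rw [hsum]
      rw [map_sum]
      simp [smul_eq_mul]
    have : dotR v (fun i => -f (Pi.single i 1)) = -f v := by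
      rw [hfv, dotR, ← Finset.sum_neg_distrib]
      exact Finset.sum_congr rfl fun i _ => by ring
    rw [this]
    linarith [hfV v hv]
end

section
/- Let A = (Q,T) be a d-dimensional VASS satisfying condition (C), i.e., there exists n ∈ Normals(A) with all components positive. Then there exists a good normal for A: a vector n ∈ Normals(A) with all components positive such that for every v ∈ cone(Inc(A)), −v ∈ cone(Inc(A)) if and only if v · n = 0. -/
open scoped BigOperators ENNReal

section Helper
open scoped InnerProductSpace BigOperators

namespace VASSProof

variable {d : ℕ}

noncomputable def castR (v : Fin d → ℤ) : EuclideanSpace ℝ (Fin d) := WithLp.toLp 2 (fun i => (v i : ℝ))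

def coneF (V : Finset (Fin d → ℤ)) : Set (EuclideanSpace ℝ (Fin d)) :=
  { x | ∃ c : (Fin d → ℤ) → ℝ, (∀ v, 0 ≤ c v) ∧ x = ∑ v ∈ V, c v • castR v }

lemma coneF_mono {S V : Finset (Fin d → ℤ)} (h : S ⊆ V) : coneF S ⊆ coneF V := by
  rintro x ⟨c, hc, rfl⟩
  classical
  refine ⟨fun v => if v ∈ S then c v else 0, fun v => ?_, ?_⟩
  · by_cases hv : v ∈ S <;> simp [hv, hc v]
  · rw [← Finset.sum_subset h (fun v _ hv => by simp [hv])]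
    exact Finset.sum_congr rfl fun v hv => by simp [hv]

lemma zero_mem_coneF (V : Finset (Fin d → ℤ)) : 0 ∈ coneF V :=
  ⟨0, fun _ => le_refl 0, by simp⟩

lemma add_mem_coneF {V : Finset (Fin d → ℤ)} {x y : EuclideanSpace ℝ (Fin d)}
    (hx : x ∈ coneF V) (hy : y ∈ coneF V) : x + y ∈ coneF V := by
  obtain ⟨c, hc, rfl⟩ := hx; obtain ⟨e, he, rfl⟩ := hy
  exact ⟨c + e, fun v => add_nonneg (hc v) (he v), by
    simp [Finset.sum_add_distrib, add_smul]⟩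

lemma smul_mem_coneF {V : Finset (Fin d → ℤ)} {x : EuclideanSpace ℝ (Fin d)} {t : ℝ}
    (ht : 0 ≤ t) (hx : x ∈ coneF V) : t • x ∈ coneF V := by
  obtain ⟨c, hc, rfl⟩ := hx
  exact ⟨fun v => t * c v, fun v => mul_nonneg ht (hc v), by
    simp [Finset.smul_sum, smul_smul]⟩

lemma caratheodory {V : Finset (Fin d → ℤ)} {x : EuclideanSpace ℝ (Fin d)}
    (hx : x ∈ coneF V) :
    ∃ S ⊆ V, LinearIndependent ℝ (fun i : ↥S => castR (i : Fin d → ℤ)) ∧ x ∈ coneF S := by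
  classical
  induction V using Finset.strongInduction with
  | _ V ih =>
  by_cases hli : LinearIndependent ℝ (fun i : ↥V => castR (i : Fin d → ℤ))
  · exact ⟨V, le_refl V, hli, hx⟩
  · obtain ⟨c, hc, hsum⟩ := hx
    rw [Fintype.not_linearIndependent_iff] at hli
    obtain ⟨g, hg0, i₀, hi₀⟩ := hli
    obtain ⟨g, hg0, i₀, hi₀⟩ : ∃ g : ↥V → ℝ, ∑ i, g i • castR (i : Fin d → ℤ) = 0 ∧
        ∃ i, 0 < g i := by
      rcases lt_or_gt_of_ne (fun h => hi₀ h) with h | h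
      · refine ⟨-g, ?_, i₀, by simpa using h⟩
        rw [show (∑ i, (-g) i • castR (i : Fin d → ℤ))
            = -∑ i, g i • castR (i : Fin d → ℤ) by simp [neg_smul], hg0, neg_zero]
      · exact ⟨g, hg0, i₀, h⟩
    have hne : (Finset.univ.filter (fun i : ↥V => 0 < g i)).Nonempty :=
      ⟨i₀, by simp [hi₀]⟩
    obtain ⟨j, hj, hjmin⟩ :=
      Finset.exists_min_image _ (fun i : ↥V => c i.1 / g i) hne
    simp only [Finset.mem_filter, Finset.mem_univ, true_and] at hj hjmin
    set t : ℝ := c j.1 / g j with ht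
    have hjpos : 0 < g j := hj
    have htnn : 0 ≤ t := div_nonneg (hc j.1) hjpos.le
    have hc' : ∀ i : ↥V, 0 ≤ c i.1 - t * g i := by
      intro i
      rcases le_or_gt (g i) 0 with h | h
      · have : t * g i ≤ 0 := mul_nonpos_of_nonneg_of_nonpos htnn h
        linarith [hc i.1]
      · have := hjmin i h
        rw [div_le_div_iff₀ hjpos h] at this
        have h2 : t * g i ≤ c i.1 := by
          rw [ht, div_mul_eq_mul_div, div_le_iff₀ hjpos]
          linarith
        linarith
    have hxmem : x ∈ coneF (V.erase (j : Fin d → ℤ)) := by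
      refine ⟨fun v => if hv : v ∈ V then c v - t * g ⟨v, hv⟩ else 0, ?_, ?_⟩
      · intro v
        by_cases hv : v ∈ V
        · simpa [hv] using hc' ⟨v, hv⟩
        · simp [hv]
      · have key : x = ∑ v ∈ V, (if hv : v ∈ V then c v - t * g ⟨v, hv⟩ else 0) • castR v := by
          rw [hsum, ← Finset.sum_coe_sort V (fun v => c v • castR v),
              ← Finset.sum_coe_sort V
                (fun v => (if hv : v ∈ V then c v - t * g ⟨v, hv⟩ else 0) • castR v)]
          have h2 : ∑ i : ↥V, (c i.1 - t * g i) • castR (i : Fin d → ℤ)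
              = ∑ i : ↥V, c i.1 • castR (i : Fin d → ℤ)
                - t • ∑ i : ↥V, g i • castR (i : Fin d → ℤ) := by
            rw [Finset.smul_sum, ← Finset.sum_sub_distrib]
            exact Finset.sum_congr rfl fun i _ => by rw [sub_smul, smul_smul]
          calc ∑ i : ↥V, c i.1 • castR (i : Fin d → ℤ)
              = ∑ i : ↥V, c i.1 • castR (i : Fin d → ℤ)
                - t • ∑ i : ↥V, g i • castR (i : Fin d → ℤ) := by rw [hg0]; simp
            _ = ∑ i : ↥V, (c i.1 - t * g i) • castR (i : Fin d → ℤ) := h2.symm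
            _ = _ := Finset.sum_congr rfl fun i _ => by simp [i.2]
        rw [key, ← Finset.sum_erase_add V _ j.2]
        have hzero : (if hv : (j : Fin d → ℤ) ∈ V then c j.1 - t * g ⟨(j : Fin d → ℤ), hv⟩
            else 0) = 0 := by
          simp only [j.2, dif_pos, Subtype.coe_eta]
          rw [ht, div_mul_cancel₀ _ hjpos.ne', sub_self]
        rw [hzero, zero_smul, add_zero]
    obtain ⟨S, hS, hSli, hxS⟩ := ih _ (Finset.erase_ssubset j.2) hxmem
    exact ⟨S, hS.trans (Finset.erase_subset _ _), hSli, hxS⟩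


lemma isClosed_coneF_of_li {S : Finset (Fin d → ℤ)}
    (h : LinearIndependent ℝ (fun i : ↥S => castR (i : Fin d → ℤ))) :
    IsClosed (coneF S) := by
  classical
  let f : (↥S → ℝ) →ₗ[ℝ] EuclideanSpace ℝ (Fin d) :=
    { toFun := fun a => ∑ i : ↥S, a i • castR (i : Fin d → ℤ)
      map_add' := fun a b => by
        simp [add_smul, Finset.sum_add_distrib]
      map_smul' := fun t a => by
        simp [Finset.smul_sum, smul_smul] }
  have hker : LinearMap.ker f = ⊥ := by
    rw [LinearMap.ker_eq_bot']
    intro a ha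
    funext i
    exact Fintype.linearIndependent_iff.mp h a ha i
  have hemb := LinearMap.isClosedEmbedding_of_injective hker
  have hP : IsClosed {a : ↥S → ℝ | ∀ i, 0 ≤ a i} := by
    have : {a : ↥S → ℝ | ∀ i, 0 ≤ a i} = ⋂ i, {a | 0 ≤ a i} := by
      ext a; simp [Set.mem_iInter]
    rw [this]
    exact isClosed_iInter fun i => isClosed_le continuous_const (continuous_apply i)
  have himg : coneF S = f '' {a : ↥S → ℝ | ∀ i, 0 ≤ a i} := by
    ext x
    constructor
    · rintro ⟨c, hc, rfl⟩
      refine ⟨fun i => c i.1, fun i => hc i.1, ?_⟩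
      show ∑ i : ↥S, c i.1 • castR (i : Fin d → ℤ) = _
      rw [Finset.sum_coe_sort S (fun v => c v • castR v)]
    · rintro ⟨a, ha, rfl⟩
      refine ⟨fun v => if hv : v ∈ S then a ⟨v, hv⟩ else 0, fun v => ?_, ?_⟩
      · by_cases hv : v ∈ S
        · simp only [hv, dif_pos]; exact ha _
        · simp [hv]
      · show _ = ∑ v ∈ S, (if hv : v ∈ S then a ⟨v, hv⟩ else 0) • castR v
        rw [← Finset.sum_coe_sort S
          (fun v => (if hv : v ∈ S then a ⟨v, hv⟩ else 0) • castR v)]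
        exact (Finset.sum_congr rfl fun i _ => by simp [i.2]).symm
  rw [himg]
  exact hemb.isClosedMap _ hP

lemma isClosed_coneF (V : Finset (Fin d → ℤ)) : IsClosed (coneF V) := by
  classical
  have heq : coneF V = ⋃ S ∈ (V.powerset.filter
      (fun (S : Finset (Fin d → ℤ)) => LinearIndependent ℝ (fun i : ↥S => castR (i : Fin d → ℤ)))), coneF S := by
    ext x
    simp only [Set.mem_iUnion, Finset.mem_filter, Finset.mem_powerset]
    constructor
    · intro hx
      obtain ⟨S, hS, hli, hxS⟩ := caratheodory hx
      exact ⟨S, ⟨hS, hli⟩, hxS⟩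
    · rintro ⟨S, ⟨hS, _⟩, hxS⟩
      exact coneF_mono hS hxS
  rw [heq]
  refine isClosed_biUnion_finset ?_
  intro S hS
  rw [Finset.mem_filter] at hS
  exact isClosed_coneF_of_li hS.2

lemma separation {V : Finset (Fin d → ℤ)} {b : EuclideanSpace ℝ (Fin d)} (hb : b ∉ coneF V) :
    ∃ y : EuclideanSpace ℝ (Fin d), (∀ x ∈ coneF V, 0 ≤ ⟪x, y⟫_ℝ) ∧ ⟪y, b⟫_ℝ < 0 := by
  let K : ProperCone ℝ (EuclideanSpace ℝ (Fin d)) :=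
    { carrier := coneF V
      smul_mem' := fun c x hx => smul_mem_coneF c.2 hx
      add_mem' := fun hx hy => add_mem_coneF hx hy
      zero_mem' := zero_mem_coneF V
      isClosed' := isClosed_coneF V }
  obtain ⟨y, h1, h2⟩ := ProperCone.hyperplane_separation' K hb
  exact ⟨y, h1, by rw [real_inner_comm]; exact h2⟩


open VASS in
lemma dotR_rep {d : ℕ} (V : Finset (Fin d → ℤ)) (c : (Fin d → ℤ) → ℝ) (y : Fin d → ℝ) :
    VASS.dotR ((∑ w ∈ V, c w • castR w : EuclideanSpace ℝ (Fin d))) y = ∑ w ∈ V, c w * VASS.dotZ w y := by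
  unfold VASS.dotR VASS.dotZ castR
  simp only [WithLp.ofLp_sum, WithLp.ofLp_smul, WithLp.ofLp_toLp, Pi.smul_apply, Finset.sum_apply, PiLp.smul_apply, smul_eq_mul, Finset.sum_mul]
  rw [Finset.sum_comm]
  refine Finset.sum_congr rfl fun w _ => ?_
  rw [Finset.mul_sum]
  refine Finset.sum_congr rfl fun i _ => ?_
  ring

lemma dotZ_add {d : ℕ} (v : Fin d → ℤ) (a b : Fin d → ℝ) :
    VASS.dotZ v (a + b) = VASS.dotZ v a + VASS.dotZ v b := by
  unfold VASS.dotZ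
  rw [← Finset.sum_add_distrib]
  exact Finset.sum_congr rfl fun i _ => by simp [mul_add]

lemma dotZ_smul {d : ℕ} (v : Fin d → ℤ) (t : ℝ) (a : Fin d → ℝ) :
    VASS.dotZ v (t • a) = t * VASS.dotZ v a := by
  unfold VASS.dotZ
  rw [Finset.mul_sum]
  exact Finset.sum_congr rfl fun i _ => by simp [Pi.smul_apply, smul_eq_mul]; ring

lemma dotZ_sum {d : ℕ} {ι : Type*} (v : Fin d → ℤ) (s : Finset ι) (f : ι → (Fin d → ℝ)) :
    VASS.dotZ v (∑ j ∈ s, f j) = ∑ j ∈ s, VASS.dotZ v (f j) := by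
  unfold VASS.dotZ
  rw [Finset.sum_comm]
  exact Finset.sum_congr rfl fun i _ => by simp [Finset.mul_sum]

lemma dotZ_neg {d : ℕ} (v : Fin d → ℤ) (y : Fin d → ℝ) :
    VASS.dotZ v (-y) = -VASS.dotZ v y := by
  unfold VASS.dotZ
  rw [← Finset.sum_neg_distrib]
  exact Finset.sum_congr rfl fun i _ => by simp

lemma mem_coneF_of_mem {d : ℕ} {V : Finset (Fin d → ℤ)} {v : Fin d → ℤ} (hv : v ∈ V) :
    castR v ∈ coneF V := by
  classical
  refine ⟨fun w => if w = v then 1 else 0, fun w => by positivity, ?_⟩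
  simp only [ite_smul, one_smul, zero_smul]
  rw [Finset.sum_ite_eq' V v castR]
  simp [hv]

lemma dotR_neg {d : ℕ} (x y : Fin d → ℝ) : VASS.dotR (-x) y = -VASS.dotR x y := by
  unfold VASS.dotR
  rw [← Finset.sum_neg_distrib]
  exact Finset.sum_congr rfl fun i _ => by simp

lemma inner_eq_dotR {d : ℕ} (x y : EuclideanSpace ℝ (Fin d)) :
    (inner ℝ x y : ℝ) = VASS.dotR x y := by
  unfold VASS.dotR
  simp [PiLp.inner_apply, RCLike.inner_apply, mul_comm]

lemma dotZ_eq_dotR {d : ℕ} (v : Fin d → ℤ) (y : Fin d → ℝ) :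
    VASS.dotZ v y = VASS.dotR (castR v) y := by
  unfold VASS.dotZ VASS.dotR castR
  rfl

/-- Membership in `coneZ` of a finite set of generators coincides with `coneF`. -/
lemma mem_coneZ_iff {d : ℕ} (V : Finset (Fin d → ℤ)) (x : Fin d → ℝ) :
    x ∈ VASS.coneZ (↑V : Set (Fin d → ℤ)) ↔
      ∃ c : (Fin d → ℤ) → ℝ, (∀ v, 0 ≤ c v) ∧ x = ∑ v ∈ V, c v • castR v := by
  classical
  constructor
  · rintro ⟨k, a, v, ha, hv, rfl⟩
    refine ⟨fun w => ∑ j ∈ Finset.univ.filter (fun j => v j = w), a j,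
      fun w => Finset.sum_nonneg fun j _ => ha j, ?_⟩
    have : ∀ w ∈ V, (∑ j ∈ Finset.univ.filter (fun j => v j = w), a j) • castR w
        = ∑ j ∈ Finset.univ.filter (fun j => v j = w), a j • castR (v j) := by
      intro w _
      rw [Finset.sum_smul]
      exact Finset.sum_congr rfl fun j hj => by
        rw [(Finset.mem_filter.mp hj).2]
    rw [Finset.sum_congr rfl this,
      Finset.sum_fiberwise_of_maps_to (fun j _ => Finset.mem_coe.mp (hv j))]
    simp [castR, WithLp.ofLp_sum]
  · rintro ⟨c, hc, rfl⟩
    refine ⟨V.card, fun j => c ((V.equivFin.symm j) : Fin d → ℤ),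
      fun j => ((V.equivFin.symm j) : Fin d → ℤ), fun j => hc _,
      fun j => Finset.mem_coe.mpr (V.equivFin.symm j).2, ?_⟩
    rw [← Finset.sum_coe_sort V (fun w => c w • castR w),
      ← Equiv.sum_comp V.equivFin.symm (fun i : ↥V => c i.1 • castR (i : Fin d → ℤ))]
    simp [castR, WithLp.ofLp_sum]

lemma inc_finite {d : ℕ} {Q : Type} [Fintype Q] (A : VASS d Q) : A.Inc.Finite := by
  have hsub : A.Inc ⊆ Set.Icc (fun _ => -(Nat.card Q : ℤ)) (fun _ => (Nat.card Q : ℤ)) := by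
    rintro w ⟨n, p, u, ⟨⟨-, hpath⟩, -, hn⟩, rfl⟩
    have hb : ∀ i, |VASS.eff n u i| ≤ (Nat.card Q : ℤ) := by
      intro i
      calc |VASS.eff n u i| ≤ ∑ j ∈ Finset.range n, |u j i| :=
            Finset.abs_sum_le_sum_abs _ _
        _ ≤ ∑ _j ∈ Finset.range n, 1 := by
            refine Finset.sum_le_sum fun j hj => ?_
            have h := A.upd_mem _ (hpath j (Finset.mem_range.mp hj)) i
            simp only at h
            rcases h with h | h | h <;> rw [h] <;> norm_num
        _ = (n : ℤ) := by simp
        _ ≤ (Nat.card Q : ℤ) := by exact_mod_cast hn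
    constructor
    · intro i
      have := hb i
      rw [abs_le] at this
      exact this.1
    · intro i
      have := hb i
      rw [abs_le] at this
      exact this.2
  exact (Set.finite_Icc _ _).subset hsub

end VASSProof

end Helper

/-- a VASS satisfying condition (C) has a good normal. -/
theorem stmt10 {d : ℕ} {Q : Type} [Fintype Q] [Nonempty Q] (A : VASS d Q)
    (hC : ∃ nv ∈ A.Normals, ∀ i, 0 < nv i) :
    ∃ nv : Fin d → ℝ, A.IsGoodNormal nv := by
  classical
  obtain ⟨n₀, ⟨hn₀ne, hn₀norm⟩, hn₀pos⟩ := hC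
  obtain ⟨i₀⟩ : Nonempty (Fin d) := by
    by_contra h
    exact hn₀ne (funext fun i => absurd ⟨i⟩ h)
  have hfin : A.Inc.Finite := VASSProof.inc_finite A
  set Vf : Finset (Fin d → ℤ) := hfin.toFinset with hVfdef
  have hVcoe : (↑Vf : Set (Fin d → ℤ)) = A.Inc := hfin.coe_toFinset
  have hmemV : ∀ {v}, v ∈ Vf → v ∈ A.Inc := fun {v} hv => by
    rw [← hVcoe]; exact hv
  have hmemV' : ∀ {v}, v ∈ A.Inc → v ∈ Vf := fun {v} hv => hfin.mem_toFinset.mpr hv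
  have hconeZ : ∀ x : Fin d → ℝ, x ∈ VASS.coneZ A.Inc ↔
      ∃ c : (Fin d → ℤ) → ℝ, (∀ v, 0 ≤ c v) ∧ x = ∑ v ∈ Vf, c v • VASSProof.castR v := by
    intro x
    rw [← hVcoe]
    exact VASSProof.mem_coneZ_iff Vf x
  set S : Finset (Fin d → ℤ) :=
    Vf.filter (fun v => ¬ (-VASSProof.castR v ∈ VASSProof.coneF Vf)) with hSdef
  have hsep : ∀ v ∈ S, ∃ m : Fin d → ℝ,
      (∀ u ∈ Vf, VASS.dotZ u m ≤ 0) ∧ VASS.dotZ v m < 0 := by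
    intro v hv
    obtain ⟨hvV, hvnot⟩ := Finset.mem_filter.mp hv
    obtain ⟨y, hy1, hy2⟩ := VASSProof.separation hvnot
    refine ⟨-y, ?_, ?_⟩
    · intro u hu
      have h1 := hy1 (VASSProof.castR u) (VASSProof.mem_coneF_of_mem hu)
      rw [VASSProof.inner_eq_dotR, ← VASSProof.dotZ_eq_dotR] at h1
      rw [VASSProof.dotZ_neg]
      linarith
    · rw [real_inner_comm, VASSProof.inner_eq_dotR, WithLp.ofLp_neg, VASSProof.dotR_neg,
        ← VASSProof.dotZ_eq_dotR] at hy2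
      rw [VASSProof.dotZ_neg]
      linarith
  choose m hm1 hm2 using hsep
  set M : Fin d → ℝ := ∑ w ∈ S.attach, m w.1 w.2 with hMdef
  have hMnonpos : ∀ u ∈ Vf, VASS.dotZ u M ≤ 0 := by
    intro u hu
    rw [hMdef, VASSProof.dotZ_sum]
    exact Finset.sum_nonpos fun w _ => hm1 w.1 w.2 u hu
  have hMstrict : ∀ v ∈ S, VASS.dotZ v M < 0 := by
    intro v hv
    rw [hMdef, VASSProof.dotZ_sum]
    have hvV : v ∈ Vf := (Finset.mem_filter.mp hv).1
    have hme : (⟨v, hv⟩ : ↥S) ∈ S.attach := Finset.mem_attach _ _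
    rw [← Finset.sum_erase_add _ _ hme]
    have h1 : VASS.dotZ v (m (⟨v, hv⟩ : ↥S).1 (⟨v, hv⟩ : ↥S).2) < 0 := hm2 v hv
    have h2 : ∑ w ∈ S.attach.erase ⟨v, hv⟩, VASS.dotZ v (m w.1 w.2) ≤ 0 :=
      Finset.sum_nonpos fun w _ => hm1 w.1 w.2 v hvV
    linarith
  set ε : ℝ := Finset.univ.inf' ⟨i₀, Finset.mem_univ i₀⟩ (fun i => n₀ i / (|M i| + 1))
    with hεdef
  have hεpos : 0 < ε := by
    rw [hεdef]
    refine (Finset.lt_inf'_iff _).mpr ?_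
    exact fun i _ => div_pos (hn₀pos i) (by positivity)
  have hεabs : ∀ i, ε * |M i| < n₀ i := by
    intro i
    have h1 : ε ≤ n₀ i / (|M i| + 1) := Finset.inf'_le _ (Finset.mem_univ i)
    have h2 : (0:ℝ) < |M i| + 1 := by positivity
    have h3 : (n₀ i / (|M i| + 1)) * (|M i| + 1) = n₀ i := div_mul_cancel₀ _ h2.ne'
    nlinarith [abs_nonneg (M i), hn₀pos i]
  set nv : Fin d → ℝ := n₀ + ε • M with hnvdef
  have hnvpos : ∀ i, 0 < nv i := by
    intro i
    have h1 := hεabs i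
    have h2 : -|M i| ≤ M i := neg_abs_le (M i)
    have : nv i = n₀ i + ε * M i := rfl
    rw [this]
    nlinarith
  have hnvnorm : ∀ v ∈ A.Inc, VASS.dotZ v nv ≤ 0 := by
    intro v hv
    rw [hnvdef, VASSProof.dotZ_add, VASSProof.dotZ_smul]
    have h1 := hn₀norm v hv
    have h2 := hMnonpos v (hmemV' hv)
    nlinarith
  have hSstrict : ∀ v ∈ S, VASS.dotZ v nv < 0 := by
    intro v hv
    rw [hnvdef, VASSProof.dotZ_add, VASSProof.dotZ_smul]
    have h1 := hn₀norm v (hmemV (Finset.mem_filter.mp hv).1)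
    have h2 := hMstrict v hv
    nlinarith
  have hnonpos : ∀ z ∈ VASS.coneZ A.Inc, VASS.dotR z nv ≤ 0 := by
    intro z hz
    obtain ⟨c, hc, rfl⟩ := (hconeZ z).mp hz
    rw [VASSProof.dotR_rep]
    exact Finset.sum_nonpos fun v hv =>
      mul_nonpos_of_nonneg_of_nonpos (hc v) (hnvnorm v (hmemV hv))
  refine ⟨nv, ⟨?_, hnvnorm⟩, hnvpos, ?_⟩
  · intro h
    have := congrFun h i₀
    exact absurd this (hnvpos i₀).ne'
  · intro x hx
    constructor
    · intro hnegx
      have h1 := hnonpos x hx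
      have h2 := hnonpos (-x) hnegx
      rw [VASSProof.dotR_neg] at h2
      linarith
    · intro h0
      obtain ⟨c, hc, hxeq⟩ := (hconeZ x).mp hx
      have hrep := VASSProof.dotR_rep Vf c nv
      rw [← hxeq] at hrep
      have hsum0 : ∑ v ∈ Vf, c v * VASS.dotZ v nv = 0 := hrep.symm.trans h0
      have hterm : ∀ v ∈ Vf, c v * VASS.dotZ v nv = 0 :=
        (Finset.sum_eq_zero_iff_of_nonpos fun v hv =>
          mul_nonpos_of_nonneg_of_nonpos (hc v) (hnvnorm v (hmemV hv))).mp hsum0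
      have hneg : ∀ v ∈ Vf, c v ≠ 0 → -VASSProof.castR v ∈ VASSProof.coneF Vf := by
        intro v hv hcv
        by_contra hnot
        have hvS : v ∈ S := Finset.mem_filter.mpr ⟨hv, hnot⟩
        have hlt := hSstrict v hvS
        have hc0 : 0 < c v := lt_of_le_of_ne (hc v) (Ne.symm hcv)
        have := hterm v hv
        nlinarith
      have hnegx : WithLp.toLp 2 (-x) ∈ VASSProof.coneF Vf := by
        have heq : WithLp.toLp 2 (-x) = ∑ v ∈ Vf, c v • (-(VASSProof.castR v)) := by
          rw [hxeq, ← WithLp.ofLp_neg, WithLp.toLp_ofLp, ← Finset.sum_neg_distrib]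
          exact Finset.sum_congr rfl fun v _ => (smul_neg _ _).symm
        rw [heq]
        refine Finset.sum_induction _ (· ∈ VASSProof.coneF Vf)
          (fun a b ha hb => VASSProof.add_mem_coneF ha hb)
          (VASSProof.zero_mem_coneF Vf) ?_
        intro v hv
        by_cases hcv : c v = 0
        · rw [hcv, zero_smul]
          exact VASSProof.zero_mem_coneF Vf
        · exact VASSProof.smul_mem_coneF (hc v) (hneg v hv hcv)
      obtain ⟨c', hc', he⟩ := hnegx
      exact (hconeZ (-x)).mpr ⟨c', hc', by rw [← he]⟩
end

section
/- Let A = (Q,T) be a d-dimensional VASS, let n ∈ Normals(A), and let A^n = (Q, T_n) where T_n = {t ∈ T : there is a short cycle γ of A containing t with eff(γ) · n = 0}. Then every cycle β of A^n lying within a single strongly connected component of A^n satisfies eff(β) · n = 0. -/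
open scoped BigOperators ENNReal

namespace VASS

variable {d : ℕ} {Q : Type}

/-- Relaxed path predicate allowing length `0`. -/
def IsPath0 (A : VASS d Q) (n : ℕ) (p : ℕ → Q) (u : ℕ → Fin d → ℤ) : Prop :=
  ∀ i < n, (p i, u i, p (i + 1)) ∈ A.T

lemma dot_eff (n : ℕ) (u : ℕ → Fin d → ℤ) (nv : Fin d → ℝ) :
    dotZ (eff n u) nv = ∑ j ∈ Finset.range n, dotZ (u j) nv := by
  simp only [dotZ, eff]
  push_cast
  simp_rw [Finset.sum_mul]
  exact Finset.sum_comm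

/-- Any (relaxed) cycle of `A` has nonpositive dot product with a normal. -/
lemma cycle_dot_nonpos [Fintype Q] (A : VASS d Q) (nv : Fin d → ℝ)
    (hn : nv ∈ A.Normals) :
    ∀ n p u, A.IsPath0 n p u → p n = p 0 →
      ∑ j ∈ Finset.range n, dotZ (u j) nv ≤ 0 := by
  intro n
  induction n using Nat.strong_induction_on with
  | _ n ih =>
    intro p u hp hc
    rcases Nat.eq_zero_or_pos n with h0 | h0
    · subst h0; simp
    by_cases hle : n ≤ Nat.card Q
    · have hmem : eff n u ∈ A.Inc :=
        ⟨n, p, u, ⟨⟨h0, hp⟩, hc, hle⟩, rfl⟩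
      have := hn.2 _ hmem
      rwa [dot_eff] at this
    · -- pigeonhole: two equal states among p 0, ..., p (card Q)
      set c := Nat.card Q with hcdef
      have hninj : ¬ Function.Injective (fun i : Fin (c + 1) => p i) := by
        intro hinj
        have := Fintype.card_le_of_injective _ hinj
        simp [hcdef, Nat.card_eq_fintype_card] at this
      rw [Function.not_injective_iff] at hninj
      obtain ⟨a0, b0, hab, hne⟩ := hninj
      -- wlog a < b
      obtain ⟨a, b, hab, hlt⟩ : ∃ a b : Fin (c+1), p a = p b ∧ (a:ℕ) < b := by
        rcases lt_or_gt_of_ne hne with h | h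
        · exact ⟨a0, b0, hab, h⟩
        · exact ⟨b0, a0, hab.symm, h⟩
      set a' := (a : ℕ); set b' := (b : ℕ)
      have hb'le : b' ≤ c := Nat.lt_succ_iff.mp b.isLt
      have hbn : b' < n := lt_of_le_of_lt hb'le (lt_of_not_ge hle)
      set l := b' - a' with hl
      have hl1 : 1 ≤ l := by omega
      have hlc : l ≤ c := by omega
      -- short cycle p a', ..., p b'
      have hshort : A.IsShortCycle l (fun k => p (a' + k)) (fun k => u (a' + k)) := by
        refine ⟨⟨hl1, fun i hi => ?_⟩, ?_, hlc⟩
        · have : a' + i < n := by omega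
          have := hp _ this
          simpa [Nat.add_assoc] using this
        · simp only []
          have : a' + l = b' := by omega
          rw [this]
          exact hab.symm
      have hshort_le : ∑ k ∈ Finset.range l, dotZ (u (a' + k)) nv ≤ 0 := by
        have := hn.2 _ ⟨l, _, _, hshort, rfl⟩
        rwa [dot_eff] at this
      -- remaining cycle of length n - l
      set m := n - a' - l with hm
      set p' : ℕ → Q := fun k => if k < a' then p k else p (k + l) with hp'
      set u' : ℕ → Fin d → ℤ := fun k => if k < a' then u k else u (k + l) with hu'
      have hrem : A.IsPath0 (a' + m) p' u' := by
        intro i hi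
        by_cases hia : i + 1 < a'
        · have : i < a' := by omega
          simpa [hp', hu', this, hia] using hp i (by omega)
        · by_cases hia2 : i < a'
          · -- i + 1 = a'
            have hia1 : i + 1 = a' := by omega
            have h1 : p' i = p i := by simp [hp', hia2]
            have h2 : u' i = u i := by simp [hu', hia2]
            have h3 : p' (i + 1) = p (i + 1) := by
              simp only [hp', if_neg (by omega : ¬ i + 1 < a')]
              rw [hia1]
              have : a' + l = b' := by omega
              rw [this]
              exact hab.symm ▸ rfl
            rw [h1, h2, h3]
            exact hp i (by omega)
          · have h1 : p' i = p (i + l) := by simp [hp', hia2]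
            have h2 : u' i = u (i + l) := by simp [hu', hia2]
            have h3 : p' (i + 1) = p (i + 1 + l) := by simp [hp', hia]
            rw [h1, h2, h3]
            have : i + l + 1 = i + 1 + l := by omega
            rw [← this]
            exact hp _ (by omega)
      have hrc : p' (a' + m) = p' 0 := by
        have h1 : p' (a' + m) = p (a' + m + l) := by
          simp [hp', (by omega : ¬ a' + m < a')]
        have h2 : a' + m + l = n := by omega
        by_cases ha0 : 0 < a'
        · have h3 : p' 0 = p 0 := by simp [hp', ha0]
          rw [h1, h2, h3, hc]
        · have ha0' : a' = 0 := by omega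
          have h3 : p' 0 = p l := by simp [hp', ha0']
          rw [h1, h2, h3, hc]
          have : l = b' := by omega
          rw [this]; rw [← hab]; congr 1; omega
      have hrem_le : ∑ j ∈ Finset.range (a' + m), dotZ (u' j) nv ≤ 0 :=
        ih (a' + m) (by omega) p' u' hrem hrc
      -- sum identity
      have hsum : ∑ j ∈ Finset.range n, dotZ (u j) nv
          = ∑ j ∈ Finset.range (a' + m), dotZ (u' j) nv
            + ∑ k ∈ Finset.range l, dotZ (u (a' + k)) nv := by
        have hn' : n = a' + (l + m) := by omega
        rw [hn', Finset.sum_range_add, Finset.sum_range_add,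
          Finset.sum_range_add]
        have e1 : ∀ j ∈ Finset.range a', dotZ (u' j) nv = dotZ (u j) nv := by
          intro j hj
          simp only [Finset.mem_range] at hj
          simp [hu', hj]
        have e2 : ∀ j ∈ Finset.range m,
            dotZ (u' (a' + j)) nv = dotZ (u (a' + (l + j))) nv := by
          intro j _
          simp only [hu', if_neg (by omega : ¬ a' + j < a')]
          have hidx : a' + j + l = a' + (l + j) := by omega
          rw [hidx]
        rw [Finset.sum_congr rfl e1, Finset.sum_congr rfl e2]
        ring
      rw [hsum]
      exact add_nonpos hrem_le hshort_le

/-- Concatenation of relaxed paths. -/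
lemma concat0 (A : VASS d Q) {m1 : ℕ} {q1 : ℕ → Q} {w1 : ℕ → Fin d → ℤ}
    {m2 : ℕ} {q2 : ℕ → Q} {w2 : ℕ → Fin d → ℤ}
    (h1 : A.IsPath0 m1 q1 w1) (h2 : A.IsPath0 m2 q2 w2)
    (hj : q1 m1 = q2 0) :
    ∃ m q w, A.IsPath0 m q w ∧ q 0 = q1 0 ∧ q m = q2 m2 ∧
      ∀ nv : Fin d → ℝ, ∑ j ∈ Finset.range m, dotZ (w j) nv
        = ∑ j ∈ Finset.range m1, dotZ (w1 j) nv
          + ∑ j ∈ Finset.range m2, dotZ (w2 j) nv := by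
  refine ⟨m1 + m2, fun j => if j < m1 then q1 j else q2 (j - m1),
    fun j => if j < m1 then w1 j else w2 (j - m1), ?_, ?_, ?_, ?_⟩
  · intro i hi
    by_cases h : i < m1
    · by_cases h' : i + 1 < m1
      · simpa [h, h'] using h1 i h
      · have : i + 1 = m1 := by omega
        simp only [if_pos h, if_neg h']
        rw [this, Nat.sub_self, ← hj, ← this]
        exact h1 i h
    · have h' : ¬ i + 1 < m1 := by omega
      simp only [if_neg h, if_neg h']
      have : i + 1 - m1 = i - m1 + 1 := by omega
      rw [this]
      exact h2 _ (by omega)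
  · by_cases h : 0 < m1
    · simp [h]
    · have : m1 = 0 := by omega
      simp [this, ← hj, this]
  · simp [(by omega : ¬ m1 + m2 < m1)]
  · intro nv
    rw [Finset.sum_range_add]
    congr 1
    · exact Finset.sum_congr rfl fun j hj => by
        simp only [Finset.mem_range] at hj; simp [hj]
    · exact Finset.sum_congr rfl fun j _ => by
        simp [(by omega : ¬ m1 + j < m1)]

/-- Rotating a cycle at position `j`: a path from `q (j+1)` back to `q j`
whose update sum is that of the cycle minus `w j`. -/
lemma rotate_cycle (A : VASS d Q) {m j : ℕ} {q : ℕ → Q} {w : ℕ → Fin d → ℤ}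
    (hp : A.IsPath0 m q w) (hc : q m = q 0) (hj : j < m) :
    ∃ m' q' w', A.IsPath0 m' q' w' ∧ q' 0 = q (j + 1) ∧ q' m' = q j ∧
      ∀ nv : Fin d → ℝ, ∑ k ∈ Finset.range m', dotZ (w' k) nv
        = ∑ k ∈ Finset.range m, dotZ (w k) nv - dotZ (w j) nv := by
  refine ⟨m - 1, fun k => if j + 1 + k < m then q (j + 1 + k) else q (j + 1 + k - m),
    fun k => if j + 1 + k < m then w (j + 1 + k) else w (j + 1 + k - m),
    ?_, ?_, ?_, ?_⟩
  · intro k hk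
    by_cases h : j + 1 + k < m
    · by_cases h' : j + 1 + (k + 1) < m
      · simp only [if_pos h, if_pos h']
        have : j + 1 + (k + 1) = j + 1 + k + 1 := by omega
        rw [this]
        exact hp _ h
      · have he : j + 1 + (k + 1) = m := by omega
        simp only [if_pos h, if_neg h']
        rw [he, Nat.sub_self, ← hc]
        have : m = j + 1 + k + 1 := by omega
        rw [this]
        exact hp _ h
    · have h' : ¬ j + 1 + (k + 1) < m := by omega
      simp only [if_neg h, if_neg h']
      have h1 : j + 1 + (k + 1) - m = j + 1 + k - m + 1 := by omega
      rw [h1]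
      exact hp _ (by omega)
  · by_cases h : j + 1 < m
    · simp [h]
    · have : j + 1 = m := by omega
      simp [this, ← hc, this]
  · simp only [if_neg (by omega : ¬ j + 1 + (m - 1) < m)]
    congr 1
    omega
  · intro nv
    have hm : m - 1 = (m - 1 - j) + j := by omega
    rw [hm, Finset.sum_range_add]
    have e1 : ∀ k ∈ Finset.range (m - 1 - j),
        dotZ (if j + 1 + k < m then w (j + 1 + k) else w (j + 1 + k - m)) nv
          = dotZ (w (j + 1 + k)) nv := by
      intro k hk
      simp only [Finset.mem_range] at hk
      rw [if_pos (by omega)]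
    have e2 : ∀ k ∈ Finset.range j,
        dotZ (if j + 1 + (m - 1 - j + k) < m then w (j + 1 + (m - 1 - j + k))
          else w (j + 1 + (m - 1 - j + k) - m)) nv = dotZ (w k) nv := by
      intro k hk
      simp only [Finset.mem_range] at hk
      rw [if_neg (by omega)]
      have hidx : j + 1 + (m - 1 - j + k) - m = k := by omega
      rw [hidx]
    rw [Finset.sum_congr rfl e1, Finset.sum_congr rfl e2]
    have hsplit := Finset.sum_range_add (fun k => dotZ (w k) nv) (j + 1) (m - 1 - j)
    rw [(by omega : j + 1 + (m - 1 - j) = m)] at hsplit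
    rw [hsplit, Finset.sum_range_succ]
    ring

end VASS

/-- every cycle of `A^nv` lying within a single SCC of `A^nv`
satisfies `eff(β) · nv = 0`. -/
theorem stmt14 {d : ℕ} {Q : Type} [Fintype Q] [Nonempty Q] (A : VASS d Q)
    (nv : Fin d → ℝ) (hn : nv ∈ A.Normals)
    (n : ℕ) (p : ℕ → Q) (u : ℕ → Fin d → ℤ)
    (hpath : (A.neutral nv).IsPath n p u) (hcyc : p n = p 0)
    (R : Set Q) (hR : (A.neutral nv).IsSCC R) (hin : ∀ i ≤ n, p i ∈ R) :
    VASS.dotZ (VASS.eff n u) nv = 0 := by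
  classical
  have hpathA : A.IsPath0 n p u := fun i hi => (hpath.2 i hi).1
  have hle : ∑ j ∈ Finset.range n, VASS.dotZ (u j) nv ≤ 0 :=
    A.cycle_dot_nonpos nv hn n p u hpathA hcyc
  have hret : ∀ i < n, ∃ m' q' w', A.IsPath0 m' q' w' ∧ q' 0 = p (i + 1) ∧
      q' m' = p i ∧
      ∑ k ∈ Finset.range m', VASS.dotZ (w' k) nv = - VASS.dotZ (u i) nv := by
    intro i hi
    obtain ⟨htA, m, q, w, hsc, hdot, j, hj, heq⟩ := hpath.2 i hi
    have hq0 : A.IsPath0 m q w := fun k hk => hsc.1.2 k hk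
    obtain ⟨m', q', w', hP, h0, hE, hS⟩ := A.rotate_cycle hq0 hsc.2.1 hj
    have e1 : q j = p i := congrArg Prod.fst heq
    have e2 : w j = u i := congrArg (fun t => t.2.1) heq
    have e3 : q (j + 1) = p (i + 1) := congrArg (fun t => t.2.2) heq
    refine ⟨m', q', w', hP, by rw [h0, e3], by rw [hE, e1], ?_⟩
    rw [VASS.dot_eff] at hdot
    rw [hS nv, hdot, e2]
    ring
  have key : ∀ k ≤ n, ∃ m q w, A.IsPath0 m q w ∧ q 0 = p k ∧ q m = p 0 ∧
      ∑ j ∈ Finset.range m, VASS.dotZ (w j) nv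
        = - ∑ j ∈ Finset.range k, VASS.dotZ (u j) nv := by
    intro k
    induction k with
    | zero =>
        exact fun _ => ⟨0, fun _ => p 0, fun _ => 0,
          fun i hi => absurd hi (Nat.not_lt_zero i), rfl, rfl, by simp⟩
    | succ k ih =>
        intro hk
        obtain ⟨m1, q1, w1, h1, h10, h1e, h1s⟩ := ih (by omega)
        obtain ⟨m2, q2, w2, h2, h20, h2e, h2s⟩ := hret k (by omega)
        obtain ⟨m, q, w, hP, h0, he, hs⟩ := A.concat0 h2 h1 (by rw [h2e, h10])
        refine ⟨m, q, w, hP, by rw [h0, h20], by rw [he, h1e], ?_⟩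
        rw [hs nv, h1s, h2s, Finset.sum_range_succ]
        ring
  obtain ⟨m, q, w, hP, h0, he, hs⟩ := key n le_rfl
  have hcyc2 : q m = q 0 := by rw [he, h0, hcyc]
  have hge := A.cycle_dot_nonpos nv hn m q w hP hcyc2
  rw [hs] at hge
  rw [VASS.dot_eff]
  linarith
end

section
/- Let A = (Q,T) be a d-dimensional VASS satisfying condition (C) and let n be a good normal for A. Then there is a constant κ ∈ ℝ⁺ such that for every w ∈ cone(Inc(A)) with w · n = 0 and Euclidean norm 1, there exist k ∈ ℕ, positive reals a_1,…,a_k, and vectors v_1,…,v_k ∈ Inc(A) such that w = Σ_{j=1}^k a_j v_j, v_j · n = 0 for all 1 ≤ j ≤ k, and for every k' ≤ k the absolute values of all components of Σ_{j=1}^{k'} a_j v_j are bounded by κ. -/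
open scoped BigOperators ENNReal

section KappaAux

variable {d : ℕ}

private lemma coeff_bound_li {k : ℕ} (vr : Fin k → Fin d → ℝ) (h : LinearIndependent ℝ vr) :
    ∃ C : ℝ, ∀ (a : Fin k → ℝ) (w : Fin d → ℝ), w = ∑ j, a j • vr j →
      (∀ i, |w i| ≤ 1) → ∀ j, |a j| ≤ C := by
  classical
  let L : (Fin k → ℝ) →ₗ[ℝ] (Fin d → ℝ) :=
    { toFun := fun a => ∑ j, a j • vr j
      map_add' := by intro x y; simp [add_smul, Finset.sum_add_distrib]
      map_smul' := by intro c x; simp [smul_smul, Finset.smul_sum] }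
  have hker : LinearMap.ker L = ⊥ := by
    rw [LinearMap.ker_eq_bot']
    intro a ha
    have := Fintype.linearIndependent_iff.mp h a ha
    funext j; exact this j
  obtain ⟨g, hg⟩ := LinearMap.exists_leftInverse_of_injective L hker
  let G := LinearMap.toContinuousLinearMap g
  refine ⟨‖G‖, ?_⟩
  intro a w hw hbd j
  have haw : G w = a := by
    have h0 : g (L a) = a := by
      have := congrArg (fun f => f a) hg
      simpa using this
    have h1 : G w = g w := rfl
    rw [h1, hw]; exact h0
  have h1 : |a j| ≤ ‖G w‖ := by
    rw [← haw]; exact norm_le_pi_norm (G w) j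
  have h2 : ‖G w‖ ≤ ‖G‖ * ‖w‖ := G.le_opNorm w
  have h3 : ‖w‖ ≤ 1 := (pi_norm_le_iff_of_nonneg zero_le_one).mpr (by simpa using hbd)
  calc |a j| ≤ ‖G‖ * ‖w‖ := h1.trans h2
    _ ≤ ‖G‖ * 1 := by nlinarith [norm_nonneg G, norm_nonneg w]
    _ = ‖G‖ := mul_one _

private lemma remove_zero {k : ℕ} {S : Set (Fin d → ℤ)} {w : Fin d → ℝ}
    (a : Fin (k+1) → ℝ) (v : Fin (k+1) → Fin d → ℤ) (j0 : Fin (k+1))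
    (hj0 : a j0 = 0) (h0 : ∀ j, 0 ≤ a j) (hv : ∀ j, v j ∈ S)
    (hsum : w = ∑ j, a j • (fun i => ((v j i : ℝ)))) :
    ∃ (a' : Fin k → ℝ) (v' : Fin k → Fin d → ℤ), (∀ j, 0 ≤ a' j) ∧ (∀ j, v' j ∈ S) ∧
      w = ∑ j, a' j • (fun i => ((v' j i : ℝ))) := by
  refine ⟨a ∘ j0.succAbove, v ∘ j0.succAbove, fun j => h0 _, fun j => hv _, ?_⟩
  rw [hsum, Fin.sum_univ_succAbove (fun j => a j • (fun i => ((v j i : ℝ)))) j0, hj0]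
  simp

private lemma cara {S : Set (Fin d → ℤ)} :
    ∀ (k : ℕ) (a : Fin k → ℝ) (v : Fin k → Fin d → ℤ), (∀ j, 0 ≤ a j) → (∀ j, v j ∈ S) →
    ∀ w : Fin d → ℝ, w = ∑ j, a j • (fun i => ((v j i : ℝ))) →
    ∃ (m : ℕ) (b : Fin m → ℝ) (u : Fin m → Fin d → ℤ), (∀ j, 0 < b j) ∧ (∀ j, u j ∈ S) ∧
      w = ∑ j, b j • (fun i => ((u j i : ℝ))) ∧
      LinearIndependent ℝ (fun j => (fun i => ((u j i : ℝ)))) := by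
  intro k
  induction k using Nat.strong_induction_on with
  | _ k IH =>
  intro a v h0 hv w hw
  by_cases hz : ∃ j0, a j0 = 0
  · obtain ⟨j0, hj0⟩ := hz
    match k, a, v, j0, h0, hv, hw, IH with
    | k'+1, a, v, j0, h0, hv, hw, IH =>
      obtain ⟨a', v', h0', hv', hw'⟩ := remove_zero a v j0 hj0 h0 hv hw
      exact IH k' (Nat.lt_succ_self _) a' v' h0' hv' w hw'
  · push_neg at hz
    have hpos : ∀ j, 0 < a j := fun j => lt_of_le_of_ne (h0 j) (Ne.symm (hz j))
    by_cases hli : LinearIndependent ℝ (fun j => (fun i => ((v j i : ℝ))))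
    · exact ⟨k, a, v, hpos, hv, hw, hli⟩
    · rw [Fintype.not_linearIndependent_iff] at hli
      obtain ⟨g0, hg0, j1, hgj1⟩ := hli
      have hex : ∃ g : Fin k → ℝ, (∑ j, g j • (fun i => ((v j i : ℝ))) = 0) ∧ ∃ j, 0 < g j := by
        rcases hgj1.lt_or_gt with hlt | hgt
        · refine ⟨-g0, by simpa [neg_smul] using congrArg Neg.neg hg0, j1,
            by simp only [Pi.neg_apply]; linarith⟩
        · exact ⟨g0, hg0, j1, hgt⟩
      obtain ⟨g, hg, hgpos⟩ := hex
      have hFne : (Finset.univ.filter (fun j => 0 < g j)).Nonempty := by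
        obtain ⟨j, hj⟩ := hgpos
        exact ⟨j, by simp [hj]⟩
      obtain ⟨j0, hj0F, hmin⟩ := Finset.exists_min_image _ (fun j => a j / g j) hFne
      have hgj0 : 0 < g j0 := by simpa using (Finset.mem_filter.mp hj0F).2
      set t := a j0 / g j0 with ht
      have htpos : 0 < t := div_pos (hpos j0) hgj0
      set a' := fun j => a j - t * g j with ha'
      have h0' : ∀ j, 0 ≤ a' j := by
        intro j
        rcases le_or_gt (g j) 0 with hgle | hgt
        · have : t * g j ≤ 0 := mul_nonpos_of_nonneg_of_nonpos htpos.le hgle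
          simp only [ha']; linarith [h0 j]
        · have := hmin j (by simp [hgt])
          have : t * g j ≤ a j := by
            rw [ht] at this ⊢
            exact (le_div_iff₀ hgt).mp this
          simp only [ha']; linarith
      have hz' : a' j0 = 0 := by
        simp only [ha', ht]
        field_simp
        ring
      have hw' : w = ∑ j, a' j • (fun i => ((v j i : ℝ))) := by
        simp only [ha', sub_smul, Finset.sum_sub_distrib, mul_smul]
        rw [← Finset.smul_sum, hg, smul_zero, sub_zero, hw]
      match k, a', v, j0, hz', h0', hv, hw', IH with
      | k'+1, a', v, j0, hz', h0', hv, hw', IH =>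
        obtain ⟨a'', v'', h0'', hv'', hw''⟩ := remove_zero a' v j0 hz' h0' hv hw'
        exact IH k' (Nat.lt_succ_self _) a'' v'' h0'' hv'' w hw''

private lemma finite_of_bounded (N : ℕ) : {v : Fin d → ℤ | ∀ i, |v i| ≤ (N:ℤ)}.Finite := by
  apply Set.Finite.subset (Set.finite_Icc (fun _ : Fin d => -(N:ℤ)) (fun _ => (N:ℤ)))
  intro v hv
  constructor <;> intro i
  · exact neg_le_of_abs_le (hv i)
  · exact le_of_abs_le (hv i)

open scoped Classical in
private noncomputable def FC (p : Σ k : ℕ, Fin k → Fin d → ℤ) : ℝ :=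
  if h : LinearIndependent ℝ (fun j => (fun i => ((p.2 j i : ℝ)))) then
    (coeff_bound_li _ h).choose else 0

private lemma uniform_bound {V : Set (Fin d → ℤ)} (hV : V.Finite) :
    ∃ C : ℝ, ∀ (k : ℕ) (v : Fin k → Fin d → ℤ), (∀ j, v j ∈ V) →
      (h : LinearIndependent ℝ (fun j => (fun i => ((v j i : ℝ))))) →
      ∀ (a : Fin k → ℝ) (w : Fin d → ℝ), w = ∑ j, a j • (fun i => ((v j i : ℝ))) →
      (∀ i, |w i| ≤ 1) → ∀ j, |a j| ≤ C := by
  classical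
  set S : Set (Σ k : ℕ, Fin k → Fin d → ℤ) :=
    {p | p.1 ≤ d ∧ ∀ j, p.2 j ∈ V} with hS
  have hSfin : S.Finite := by
    have : S ⊆ ⋃ k ∈ Set.Iic d, (Sigma.mk k '' {v : Fin k → Fin d → ℤ | ∀ j, v j ∈ V}) := by
      rintro ⟨k, v⟩ ⟨hk, hv⟩
      exact Set.mem_biUnion hk ⟨v, hv, rfl⟩
    refine Set.Finite.subset (Set.Finite.biUnion (Set.finite_Iic d) (fun k _ => ?_)) this
    apply Set.Finite.image
    have : {v : Fin k → Fin d → ℤ | ∀ j, v j ∈ V} ⊆ Set.univ.pi (fun _ : Fin k => V) := by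
      intro v hv j _; exact hv j
    exact Set.Finite.subset (Set.Finite.pi (fun _ => hV)) this
  obtain ⟨C, hC⟩ := (hSfin.image FC).bddAbove
  refine ⟨C, ?_⟩
  intro k v hv h a w hw hbd j
  have hk : k ≤ d := by
    have := h.fintype_card_le_finrank
    simpa [Module.finrank_pi] using this
  have hmem : (⟨k, v⟩ : Σ k : ℕ, Fin k → Fin d → ℤ) ∈ S := ⟨hk, hv⟩
  have hFC : FC ⟨k, v⟩ ∈ FC '' S := ⟨_, hmem, rfl⟩
  have hle : FC ⟨k, v⟩ ≤ C := hC hFC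
  have : |a j| ≤ FC ⟨k, v⟩ := by
    simp only [FC]
    rw [dif_pos h]
    exact (coeff_bound_li _ h).choose_spec a w hw hbd j
  linarith

private lemma dotR_sum {k : ℕ} (a : Fin k → ℝ) (v : Fin k → Fin d → ℤ) (nv : Fin d → ℝ) :
    (∑ i, (∑ j, a j • (fun i' => ((v j i' : ℝ)))) i * nv i)
      = ∑ j, a j * (∑ i, (v j i : ℝ) * nv i) := by
  simp only [Finset.sum_apply, Pi.smul_apply, smul_eq_mul, Finset.sum_mul, Finset.mul_sum]
  rw [Finset.sum_comm]
  exact Finset.sum_congr rfl fun j _ => Finset.sum_congr rfl fun i _ => by ring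

end KappaAux

/-- the `κ`-lemma. For a good normal `nv` there is `κ > 0` such that
every unit vector `w ∈ cone(Inc A)` with `w · nv = 0` can be written as a
non-negative combination of vectors of `Inc(A)` orthogonal to `nv`, all of whose
partial sums have components bounded by `κ` in absolute value. -/
theorem stmt15 {d : ℕ} {Q : Type} [Fintype Q] [Nonempty Q] (A : VASS d Q)
    (nv : Fin d → ℝ) (hgood : A.IsGoodNormal nv) :
    ∃ κ : ℝ, 0 < κ ∧ ∀ w : Fin d → ℝ, w ∈ VASS.coneZ A.Inc → VASS.dotR w nv = 0 →
      Real.sqrt (∑ i, w i ^ 2) = 1 →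
      ∃ (k : ℕ) (a : Fin k → ℝ) (v : Fin k → Fin d → ℤ),
        (∀ j, 0 < a j) ∧ (∀ j, v j ∈ A.Inc) ∧
        (w = ∑ j, a j • (fun i => ((v j i : ℝ)))) ∧
        (∀ j, VASS.dotZ (v j) nv = 0) ∧
        (∀ k' : ℕ, k' ≤ k → ∀ i : Fin d,
          |∑ j ∈ Finset.univ.filter (fun j : Fin k => (j : ℕ) < k'), a j * (v j i : ℝ)| ≤ κ) := by
  classical
  obtain ⟨hnormal, hposnv, hcone⟩ := hgood
  set N : ℕ := Nat.card Q with hN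
  have hbd : ∀ v ∈ A.Inc, ∀ i, |v i| ≤ (N : ℤ) := by
    rintro v ⟨n, p, u, ⟨⟨hn, hpath⟩, hcyc, hlen⟩, rfl⟩ i
    have hu : ∀ j < n, ∀ i', |u j i'| ≤ 1 := by
      intro j hj i'
      have h' : u j i' = -1 ∨ u j i' = 0 ∨ u j i' = 1 := A.upd_mem _ (hpath j hj) i'
      rcases h' with h | h | h <;> simp [h]
    have heq : VASS.eff n u i = ∑ j ∈ Finset.range n, u j i := rfl
    rw [heq]
    calc |∑ j ∈ Finset.range n, u j i| ≤ ∑ j ∈ Finset.range n, |u j i| :=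
          Finset.abs_sum_le_sum_abs _ _
      _ ≤ ∑ j ∈ Finset.range n, 1 :=
          Finset.sum_le_sum (fun j hj => hu j (Finset.mem_range.mp hj) i)
      _ = (n : ℤ) := by simp
      _ ≤ (N : ℤ) := by exact_mod_cast hlen
  have hIncFin : A.Inc.Finite := (finite_of_bounded N).subset (fun v hv i => hbd v hv i)
  obtain ⟨C, hC⟩ := uniform_bound hIncFin
  set CN : ℝ := max C 0 with hCN
  refine ⟨(d : ℝ) * CN * (N : ℝ) + 1, by positivity, ?_⟩
  intro w hw horth hnorm
  obtain ⟨k0, a0, v0, h00, hv0, hw0⟩ := hw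
  obtain ⟨k, a, v, hapos, hvInc, hsum, hli⟩ := cara k0 a0 v0 h00 hv0 w hw0
  have hdots : ∀ j, VASS.dotZ (v j) nv = 0 := by
    have hsum0 : ∑ j, a j * VASS.dotZ (v j) nv = 0 := by
      have h2 : VASS.dotR w nv = ∑ j, a j * VASS.dotZ (v j) nv := by
        simp only [VASS.dotR, VASS.dotZ, hsum]
        exact dotR_sum a v nv
      rw [← h2]; exact horth
    have hterm : ∀ j ∈ Finset.univ, a j * VASS.dotZ (v j) nv ≤ 0 := fun j _ =>
      mul_nonpos_of_nonneg_of_nonpos (hapos j).le (hnormal.2 _ (hvInc j))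
    intro j
    have h3 := (Finset.sum_eq_zero_iff_of_nonpos hterm).mp hsum0 j (Finset.mem_univ j)
    exact (mul_eq_zero.mp h3).resolve_left (hapos j).ne'
  have hwbd : ∀ i, |w i| ≤ 1 := by
    intro i
    have hS : ∑ i, w i ^ 2 = 1 := by
      have hnn : (0:ℝ) ≤ ∑ i, w i ^ 2 := Finset.sum_nonneg fun i _ => sq_nonneg _
      nlinarith [Real.sq_sqrt hnn, hnorm]
    have h1 : w i ^ 2 ≤ 1 :=
      hS ▸ Finset.single_le_sum (f := fun i => w i ^ 2) (fun i _ => sq_nonneg _)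
        (Finset.mem_univ i)
    nlinarith [sq_abs (w i), abs_nonneg (w i)]
  have hk : k ≤ d := by
    have := hli.fintype_card_le_finrank
    simpa [Module.finrank_pi] using this
  have habd : ∀ j, |a j| ≤ C := hC k v hvInc hli a w hsum hwbd
  refine ⟨k, a, v, hapos, hvInc, hsum, hdots, ?_⟩
  intro k' hk' i
  have hCNnn : 0 ≤ CN := le_max_right C 0
  have hcard : ((Finset.univ.filter (fun j : Fin k => (j : ℕ) < k')).card : ℝ) ≤ (d : ℝ) := by
    have h4 : (Finset.univ.filter (fun j : Fin k => (j : ℕ) < k')).card ≤ k :=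
      (Finset.card_filter_le _ _).trans (by simp)
    exact_mod_cast h4.trans hk
  calc |∑ j ∈ Finset.univ.filter (fun j : Fin k => (j : ℕ) < k'), a j * (v j i : ℝ)|
      ≤ ∑ j ∈ Finset.univ.filter (fun j : Fin k => (j : ℕ) < k'), |a j * (v j i : ℝ)| :=
        Finset.abs_sum_le_sum_abs _ _
    _ ≤ ∑ _j ∈ Finset.univ.filter (fun j : Fin k => (j : ℕ) < k'), CN * (N : ℝ) := by
        refine Finset.sum_le_sum (fun j _ => ?_)
        rw [abs_mul]
        have h1 : |a j| ≤ CN := (habd j).trans (le_max_left _ _)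
        have h2 : |(v j i : ℝ)| ≤ (N : ℝ) := by
          have h5 := hbd (v j) (hvInc j) i
          have h6 : |(v j i : ℝ)| = ((|v j i| : ℤ) : ℝ) := by push_cast; ring
          rw [h6]; exact_mod_cast h5
        exact mul_le_mul h1 h2 (abs_nonneg _) hCNnn
    _ = ((Finset.univ.filter (fun j : Fin k => (j : ℕ) < k')).card : ℝ) * (CN * (N : ℝ)) := by
        rw [Finset.sum_const, nsmul_eq_mul]
    _ ≤ (d : ℝ) * (CN * (N : ℝ)) := by
        have hnn : (0:ℝ) ≤ CN * (N : ℝ) := by positivity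
        exact mul_le_mul_of_nonneg_right hcard hnn
    _ ≤ (d : ℝ) * CN * (N : ℝ) + 1 := by rw [mul_assoc]; linarith
end

section
/- Consider the 3-dimensional VASS A = (Q,T) with Q = {q_1,q_2,q_3,q_4} and T = {(q_1,(1,0,0),q_2), (q_2,(1,−1,0),q_1), (q_2,(0,0,0),q_4), (q_4,(0,1,0),q_3), (q_3,(−1,1,0),q_4), (q_3,(0,0,−1),q_1)}. Then A is strongly connected, satisfies condition (D), and its termination complexity satisfies 𝓛(n) ∈ Ω(2ⁿ), i.e., there is a ∈ ℝ⁺ with 𝓛(n) ≥ a·2ⁿ for all sufficiently large n (in particular, for each sufficiently large n there is a zero-avoiding computation from q_1(n,n,n) of length at least 4ⁿ − n). -/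
open scoped BigOperators ENNReal

/-- The concrete 3-dimensional VASS of Fig. 5 (states: `q_i` is `i-1 : Fin 4`). -/
def A17 : VASS 3 (Fin 4) where
  T := {(0, ![1, 0, 0], 1), (1, ![1, -1, 0], 0), (1, ![0, 0, 0], 3),
        (3, ![0, 1, 0], 2), (2, ![-1, 1, 0], 3), (2, ![0, 0, -1], 0)}
  upd_mem := by
    intro t ht i
    simp only [Set.mem_insert_iff, Set.mem_singleton_iff] at ht
    rcases ht with rfl | rfl | rfl | rfl | rfl | rfl <;> fin_cases i <;> simp

namespace Stmt17Aux

open VASS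

/-! ### Reachability -/

lemma reach_step {p q : Fin 4} (u : Fin 3 → ℤ) (h : (p, u, q) ∈ A17.T) :
    A17.Reaches p q := by
  refine ⟨1, fun i => if i = 0 then p else q, fun _ => u, ⟨le_refl 1, ?_⟩, by simp, by simp⟩
  intro i hi
  interval_cases i
  simpa using h

lemma reach_trans {p q r : Fin 4} (h1 : A17.Reaches p q) (h2 : A17.Reaches q r) :
    A17.Reaches p r := by
  obtain ⟨n, pp, u, ⟨hn, hpath⟩, h0, hN⟩ := h1
  obtain ⟨m, pp', u', ⟨hm, hpath'⟩, h0', hM⟩ := h2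
  refine ⟨n + m, fun i => if i < n then pp i else pp' (i - n),
    fun i => if i < n then u i else u' (i - n), ⟨by omega, ?_⟩, ?_, ?_⟩
  · intro i hi
    by_cases h : i < n
    · by_cases h' : i + 1 < n
      · simpa only [if_pos h, if_pos h'] using hpath i h
      · have hi1 : i + 1 = n := by omega
        have e : pp' (i + 1 - n) = pp (i + 1) := by
          rw [show i + 1 - n = 0 from by omega, h0', ← hN, hi1]
        simp only [if_pos h, if_neg h', e]
        exact hpath i h
    · have h' : ¬ i + 1 < n := by omega
      have e : i + 1 - n = (i - n) + 1 := by omega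
      simp only [if_neg h, if_neg h', e]
      exact hpath' (i - n) (by omega)
  · simp only [if_pos (show 0 < n from by omega)]
    exact h0
  · simp only [if_neg (show ¬ n + m < n from by omega)]
    rw [show n + m - n = m from by omega]
    exact hM

lemma strong_conn : ∀ p q : Fin 4, p ≠ q → A17.Reaches p q := by
  have m1 : ((0 : Fin 4), ![1, 0, 0], (1 : Fin 4)) ∈ A17.T := by simp [A17]
  have m2 : ((1 : Fin 4), ![1, -1, 0], (0 : Fin 4)) ∈ A17.T := by simp [A17]
  have m3 : ((1 : Fin 4), ![0, 0, 0], (3 : Fin 4)) ∈ A17.T := by simp [A17]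
  have m4 : ((3 : Fin 4), ![0, 1, 0], (2 : Fin 4)) ∈ A17.T := by simp [A17]
  have m5 : ((2 : Fin 4), ![-1, 1, 0], (3 : Fin 4)) ∈ A17.T := by simp [A17]
  have m6 : ((2 : Fin 4), ![0, 0, -1], (0 : Fin 4)) ∈ A17.T := by simp [A17]
  have r01 := reach_step _ m1
  have r10 := reach_step _ m2
  have r13 := reach_step _ m3
  have r32 := reach_step _ m4
  have r23 := reach_step _ m5
  have r20 := reach_step _ m6
  have r03 := reach_trans r01 r13
  have r02 := reach_trans r03 r32
  have r12 := reach_trans r13 r32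
  have r30 := reach_trans r32 r20
  have r31 := reach_trans r30 r01
  have r21 := reach_trans r20 r01
  intro p q hpq
  fin_cases p <;> fin_cases q <;> first
    | exact absurd rfl hpq
    | assumption

/-! ### zero-avoiding computations -/

def Comp (c : Fin 4) (v : Fin 3 → ℕ) (n : ℕ) : Prop :=
  ∃ q z, q 0 = c ∧ z 0 = v ∧ A17.IsZeroAvoiding n q z

lemma comp_zero (c : Fin 4) (v : Fin 3 → ℕ) (hv : ∀ j, 0 < v j) : Comp c v 0 :=
  ⟨fun _ => c, fun _ => v, rfl, rfl, fun _ _ j => hv j,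
    fun i hi => absurd hi (Nat.not_lt_zero i)⟩

lemma comp_step {c c' : Fin 4} {v v' : Fin 3 → ℕ} {n : ℕ} (u : Fin 3 → ℤ)
    (hT : (c, u, c') ∈ A17.T) (hv : ∀ j, 0 < v j)
    (he : ∀ j, (v' j : ℤ) = v j + u j)
    (h : Comp c' v' n) : Comp c v (n + 1) := by
  obtain ⟨q, z, hq0, hz0, hpos, htr⟩ := h
  refine ⟨fun i => match i with | 0 => c | (i+1) => q i,
          fun i => match i with | 0 => v | (i+1) => z i, rfl, rfl, ?_, ?_⟩
  · intro i hi j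
    match i with
    | 0 => exact hv j
    | (i+1) => exact hpos i (by omega) j
  · intro i hi
    match i with
    | 0 =>
      have hu : (fun j => ((z 0 j : ℤ) - (v j : ℤ))) = u := by
        funext j
        rw [hz0]
        have := he j
        omega
      show (c, fun j => ((z 0 j : ℤ) - (v j : ℤ)), q 0) ∈ A17.T
      rw [hu, hq0]
      exact hT
    | (i+1) => exact htr i (by omega)

lemma s1 {x y zc n : ℕ} (hx : 0 < x) (hy : 0 < y) (hz : 0 < zc)
    (h : Comp 1 ![x + 1, y, zc] n) : Comp 0 ![x, y, zc] (n + 1) := by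
  refine comp_step ![1, 0, 0] (by simp [A17]) ?_ ?_ h
  · intro j; fin_cases j <;> simpa
  · intro j; fin_cases j <;> (simp; try omega)

lemma s2 {x y zc n : ℕ} (hx : 0 < x) (hz : 0 < zc)
    (h : Comp 0 ![x + 1, y, zc] n) : Comp 1 ![x, y + 1, zc] (n + 1) := by
  refine comp_step ![1, -1, 0] (by simp [A17]) ?_ ?_ h
  · intro j; fin_cases j <;> (simp; try omega)
  · intro j; fin_cases j <;> (simp; try omega)

lemma s3 {x y zc n : ℕ} (hx : 0 < x) (hy : 0 < y) (hz : 0 < zc)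
    (h : Comp 3 ![x, y, zc] n) : Comp 1 ![x, y, zc] (n + 1) := by
  refine comp_step ![0, 0, 0] (by simp [A17]) ?_ ?_ h
  · intro j; fin_cases j <;> simpa
  · intro j; fin_cases j <;> simp

lemma s4 {x y zc n : ℕ} (hx : 0 < x) (hy : 0 < y) (hz : 0 < zc)
    (h : Comp 2 ![x, y + 1, zc] n) : Comp 3 ![x, y, zc] (n + 1) := by
  refine comp_step ![0, 1, 0] (by simp [A17]) ?_ ?_ h
  · intro j; fin_cases j <;> simpa
  · intro j; fin_cases j <;> (simp; try omega)

lemma s5 {x y zc n : ℕ} (hy : 0 < y) (hz : 0 < zc)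
    (h : Comp 3 ![x, y + 1, zc] n) : Comp 2 ![x + 1, y, zc] (n + 1) := by
  refine comp_step ![-1, 1, 0] (by simp [A17]) ?_ ?_ h
  · intro j; fin_cases j <;> (simp; try omega)
  · intro j; fin_cases j <;> (simp; try omega)

lemma s6 {x y zc n : ℕ} (hx : 0 < x) (hy : 0 < y)
    (h : Comp 0 ![x, y, zc] n) : Comp 2 ![x, y, zc + 1] (n + 1) := by
  refine comp_step ![0, 0, -1] (by simp [A17]) ?_ ?_ h
  · intro j; fin_cases j <;> (simp; try omega)
  · intro j; fin_cases j <;> (simp; try omega)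

lemma loop1 : ∀ k x y zc n, 0 < x → 0 < y → 0 < zc →
    Comp 0 ![x + 2 * k, y, zc] n → Comp 0 ![x, y + k, zc] (n + 2 * k) := by
  intro k
  induction k with
  | zero => intro x y zc n hx hy hz h; simpa using h
  | succ k ih =>
    intro x y zc n hx hy hz h
    have h1 : Comp 0 ![x + 2, y + k, zc] (n + 2 * k) := by
      refine ih (x + 2) y zc n (by omega) hy hz ?_
      rwa [show x + 2 * (k + 1) = x + 2 + 2 * k from by ring] at h
    have h2 : Comp 1 ![x + 1, y + k + 1, zc] (n + 2 * k + 1) := s2 (by omega) hz h1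
    have h3 : Comp 0 ![x, y + k + 1, zc] (n + 2 * k + 2) := s1 hx (by omega) hz h2
    rwa [show y + (k + 1) = y + k + 1 from by ring,
         show n + 2 * (k + 1) = n + 2 * k + 2 from by ring]

lemma loop2 : ∀ k y zc n, 0 < y → 0 < zc →
    Comp 3 ![1, y + 2 * k, zc] n → Comp 3 ![1 + k, y, zc] (n + 2 * k) := by
  intro k
  induction k with
  | zero => intro y zc n hy hz h; simpa using h
  | succ k ih =>
    intro y zc n hy hz h
    have h1 : Comp 3 ![1 + k, y + 2, zc] (n + 2 * k) := by
      refine ih (y + 2) zc n (by omega) hz ?_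
      rwa [show y + 2 * (k + 1) = y + 2 + 2 * k from by ring] at h
    have h2 : Comp 2 ![1 + k + 1, y + 1, zc] (n + 2 * k + 1) := s5 (by omega) hz h1
    have h3 : Comp 3 ![1 + k + 1, y, zc] (n + 2 * k + 2) := s4 (by omega) hy hz h2
    rwa [show 1 + (k + 1) = 1 + k + 1 from by ring,
         show n + 2 * (k + 1) = n + 2 * k + 2 from by ring]

lemma roundL (x y zc n : ℕ) (hzc : 0 < zc)
    (h : Comp 0 ![1, 2 * x + 4 * y + 4, zc] n) :
    Comp 0 ![x + 1, y + 1, zc + 1] (n + (2 * x + 6 * y + 6)) := by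
  have h1 : Comp 2 ![1, 2 * x + 4 * y + 4, zc + 1] (n + 1) := s6 (by omega) (by omega) h
  have h2 : Comp 3 ![1, 2 * x + 4 * y + 3, zc + 1] (n + 2) := by
    have := s4 (x := 1) (y := 2 * x + 4 * y + 3) (zc := zc + 1)
      (by omega) (by omega) (by omega) (by rwa [show 2*x+4*y+3+1 = 2*x+4*y+4 from by ring])
    exact this
  have h3 : Comp 3 ![1 + (x + 2 * y + 1), 1, zc + 1] (n + 2 + 2 * (x + 2 * y + 1)) := by
    refine loop2 (x + 2 * y + 1) 1 (zc + 1) (n + 2) (by omega) (by omega) ?_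
    rwa [show 1 + 2 * (x + 2 * y + 1) = 2 * x + 4 * y + 3 from by ring]
  have h3' : Comp 3 ![x + 2 * y + 2, 1, zc + 1] (n + 2 * x + 4 * y + 4) := by
    rwa [show 1 + (x + 2 * y + 1) = x + 2 * y + 2 from by ring,
         show n + 2 + 2 * (x + 2 * y + 1) = n + 2 * x + 4 * y + 4 from by ring] at h3
  have h4 : Comp 1 ![x + 2 * y + 2, 1, zc + 1] (n + 2 * x + 4 * y + 5) :=
    s3 (by omega) (by omega) (by omega) h3'
  have h5 : Comp 0 ![x + 2 * y + 1, 1, zc + 1] (n + 2 * x + 4 * y + 6) := by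
    refine s1 (by omega) (by omega) (by omega) ?_
    rwa [show x + 2 * y + 1 + 1 = x + 2 * y + 2 from by ring]
  have h6 : Comp 0 ![x + 1, 1 + y, zc + 1] (n + 2 * x + 4 * y + 6 + 2 * y) := by
    refine loop1 y (x + 1) 1 (zc + 1) _ (by omega) (by omega) (by omega) ?_
    rwa [show x + 1 + 2 * y = x + 2 * y + 1 from by ring]
  rwa [show 1 + y = y + 1 from by ring,
       show n + 2 * x + 4 * y + 6 + 2 * y = n + (2 * x + 6 * y + 6) from by ring] at h6

lemma mainIH (zc : ℕ) : ∀ y, ∃ n, Comp 0 ![1, y + 1, zc + 1] n ∧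
    2 * (y + 1) * 4 ^ zc ≤ n + 2 * (y + 1) := by
  induction zc with
  | zero =>
    intro y
    exact ⟨0, comp_zero _ _ (by intro j; fin_cases j <;> simp), by simp⟩
  | succ zc ih =>
    intro y
    obtain ⟨n, hc, hn⟩ := ih (4 * y + 3)
    refine ⟨n + (2 * 0 + 6 * y + 6), ?_, ?_⟩
    · have := roundL 0 y (zc + 1) n (by omega)
        (by rwa [show 2 * 0 + 4 * y + 4 = 4 * y + 3 + 1 from by ring])
      simpa using this
    · rw [pow_succ, show 2 * (y + 1) * (4 ^ zc * 4) = 2 * (4 * y + 3 + 1) * 4 ^ zc from by ring]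
      exact le_trans hn (by omega)

lemma big (k : ℕ) : ∃ len, Comp 0 ![k + 9, k + 9, k + 9] len ∧ 4 ^ (k + 9) ≤ len := by
  obtain ⟨m, hc, hm⟩ := mainIH (k + 7) (6 * k + 51)
  have hc' : Comp 0 ![k + 8 + 1, k + 8 + 1, k + 8 + 1]
      (m + (2 * (k + 8) + 6 * (k + 8) + 6)) := by
    refine roundL (k + 8) (k + 8) (k + 8) m (by omega) ?_
    rwa [show 2 * (k + 8) + 4 * (k + 8) + 4 = 6 * k + 51 + 1 from by ring,
         show k + 8 = k + 7 + 1 from by ring]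
  refine ⟨m + (2 * (k + 8) + 6 * (k + 8) + 6), ?_, ?_⟩
  · rwa [show k + 9 = k + 8 + 1 from by ring]
  · have hA : (2 : ℕ) ≤ 4 ^ (k + 7) :=
      le_trans (by norm_num) (Nat.le_self_pow (by omega) 4)
    have hm' : (12 * k + 104) * 4 ^ (k + 7) ≤ m + (12 * k + 104) := by
      rw [show ((12 : ℕ) * k + 104) = 2 * (6 * k + 51 + 1) from by ring]
      exact hm
    have h1 : (12 * k + 88) * 2 ≤ (12 * k + 88) * 4 ^ (k + 7) :=
      Nat.mul_le_mul_left _ hA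
    rw [show k + 9 = k + 7 + 2 from by ring, pow_add]
    norm_num
    nlinarith [hm', h1]

/-! ### Normals -/

def pc1 : ℕ → Fin 4 := fun i => if i = 1 then 1 else 0
def uc1 : ℕ → Fin 3 → ℤ := fun i => if i = 0 then ![1, 0, 0] else ![1, -1, 0]
def pc2 : ℕ → Fin 4 := fun i => if i = 1 then 2 else 3
def uc2 : ℕ → Fin 3 → ℤ := fun i => if i = 0 then ![0, 1, 0] else ![-1, 1, 0]

lemma inc1 : VASS.eff 2 uc1 ∈ A17.Inc := by
  refine ⟨2, pc1, uc1, ⟨⟨one_le_two, ?_⟩, by simp [pc1], by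
    simp [Nat.card_eq_fintype_card]⟩, rfl⟩
  intro i hi
  interval_cases i <;> simp [pc1, uc1, A17]

lemma inc2 : VASS.eff 2 uc2 ∈ A17.Inc := by
  refine ⟨2, pc2, uc2, ⟨⟨one_le_two, ?_⟩, by simp [pc2], by
    simp [Nat.card_eq_fintype_card]⟩, rfl⟩
  intro i hi
  interval_cases i <;> simp [pc2, uc2, A17]

lemma no_pos_normal : ¬ ∃ nv ∈ A17.Normals, ∀ i, 0 < nv i := by
  rintro ⟨nv, ⟨-, hdot⟩, hpos⟩
  have h1 := hdot _ inc1
  have h2 := hdot _ inc2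
  simp [VASS.dotZ, VASS.eff, Finset.sum_range_succ, uc1, uc2,
    Fin.sum_univ_three] at h1 h2
  have p0 := hpos 0
  have p1 := hpos 1
  nlinarith [h1, h2, p0, p1]

lemma nonneg_normal : ∃ nv ∈ A17.Normals, ∀ i, 0 ≤ nv i := by
  refine ⟨![0, 0, 1], ⟨?_, ?_⟩, ?_⟩
  · intro h
    have := congrFun h 2
    simp at this
  · rintro v ⟨m, p, u, ⟨⟨hm, hpath⟩, -, -⟩, rfl⟩
    have hle : ∀ j < m, u j 2 ≤ 0 := by
      intro j hj
      have ht := hpath j hj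
      simp only [A17, Set.mem_insert_iff, Set.mem_singleton_iff, Prod.mk.injEq] at ht
      rcases ht with ⟨-, h, -⟩ | ⟨-, h, -⟩ | ⟨-, h, -⟩ | ⟨-, h, -⟩ | ⟨-, h, -⟩ | ⟨-, h, -⟩ <;>
        rw [h] <;> simp
    have hsum : (∑ j ∈ Finset.range m, u j 2) ≤ 0 :=
      Finset.sum_nonpos fun j hj => hle j (Finset.mem_range.mp hj)
    simp only [VASS.dotZ, VASS.eff, Fin.sum_univ_three]
    simp only [Matrix.cons_val_zero, Matrix.cons_val_one, Matrix.head_cons,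
      Matrix.cons_val_two, Matrix.tail_cons, mul_zero, mul_one, zero_add, add_zero]
    exact_mod_cast hsum
  · intro i; fin_cases i <;> norm_num

lemma bigfun (n : ℕ) (hn : 9 ≤ n) :
    ∃ len, Comp 0 (fun _ => n) len ∧ 4 ^ n ≤ len := by
  obtain ⟨len, hc, hlen⟩ := big (n - 9)
  rw [show n - 9 + 9 = n from by omega] at hc hlen
  refine ⟨len, ?_, hlen⟩
  have e : ![n, n, n] = (fun _ => n : Fin 3 → ℕ) := by funext i; fin_cases i <;> rfl
  rwa [e] at hc

end Stmt17Aux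


/-- the VASS `A17` is strongly connected, satisfies condition (D),
and has termination complexity `Ω(2^n)`; in particular, for every sufficiently
large `n` there is a zero-avoiding computation from `q₁(n,n,n)` of length at
least `4^n - n`. -/
theorem stmt17 :
    (∀ p q : Fin 4, p ≠ q → A17.Reaches p q) ∧
    (¬ ∃ nv ∈ A17.Normals, ∀ i, 0 < nv i) ∧
    (∃ nv ∈ A17.Normals, ∀ i, 0 ≤ nv i) ∧
    (∃ a : ℝ, 0 < a ∧ ∃ N : ℕ, ∀ n : ℕ, N ≤ n →
      ENNReal.ofReal (a * 2 ^ n) ≤ (A17.L n : ℝ≥0∞)) ∧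
    (∃ N : ℕ, ∀ n : ℕ, N ≤ n →
      ∃ (len : ℕ) (q : ℕ → Fin 4) (z : ℕ → Fin 3 → ℕ),
        q 0 = 0 ∧ z 0 = (fun _ => n) ∧ A17.IsZeroAvoiding len q z ∧
        4 ^ n - n ≤ len) := by
  
  refine ⟨Stmt17Aux.strong_conn, Stmt17Aux.no_pos_normal, Stmt17Aux.nonneg_normal, ?_, ?_⟩
  · refine ⟨1, one_pos, 9, fun n hn => ?_⟩
    obtain ⟨len, hc, hlen⟩ := Stmt17Aux.bigfun n hn
    obtain ⟨q, z, hq, hz, hza⟩ := hc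
    have h2n : 2 ^ n ≤ len := le_trans (Nat.pow_le_pow_left (by norm_num) n) hlen
    have hL : ((2 ^ n : ℕ) : ℕ∞) ≤ A17.L n := by
      have h1 : ((len : ℕ) : ℕ∞) ≤ A17.Lval 0 (fun _ => n) :=
        le_iSup_of_le len (le_iSup_of_le ⟨q, z, hq, hz, hza⟩ le_rfl)
      have h2 : A17.Lval 0 (fun _ => n) ≤ A17.L n :=
        le_iSup_of_le 0 (le_iSup_of_le (fun _ => n)
          (le_iSup_of_le (Finset.sup_const ⟨0, Finset.mem_univ 0⟩ n) le_rfl))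
      exact le_trans (Nat.cast_le.mpr h2n) (le_trans h1 h2)
    calc ENNReal.ofReal (1 * 2 ^ n) = ((2 ^ n : ℕ) : ℝ≥0∞) := by
          rw [one_mul, show ((2 : ℝ)) ^ n = ((2 ^ n : ℕ) : ℝ) from by push_cast; ring,
            ENNReal.ofReal_natCast]
      _ = (((2 ^ n : ℕ) : ℕ∞) : ℝ≥0∞) := by simp
      _ ≤ _ := ENat.toENNReal_le.mpr hL
  · refine ⟨9, fun n hn => ?_⟩
    obtain ⟨len, ⟨q, z, hq, hz, hza⟩, hlen⟩ := Stmt17Aux.bigfun n hn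
    exact ⟨len, q, z, hq, hz, hza, le_trans (Nat.sub_le _ _) hlen⟩
end
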